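/- arXiv:1705.09941 — 9 statements merged into one kernel-verified Lean document; each statement's English description precedes it below -/
import Mathlib

section
/- Let E be a subset of a metric space X and δ > 0. Then H^1(E) ≥ L_δ(E), where L_δ(E) is the supremum of Σ_i diam(E_i) over all finite disjoint families {E_i} of continua contained in E with diam(E_i) ≤ δ. -/
open MeasureTheory ENNReal

/-- `Lδ(E)`: supremum of `∑ diam Eᵢ` over finite pairwise disjoint families of
compact connected subsets of `E` with diameters at most `δ`. -/
noncomputable def Ldelta {X : Type*} [MetricSpace X] (E : Set X) (δ : ℝ≥0∞) : ℝ≥0∞ :=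
  ⨆ (n : ℕ) (F : Fin n → Set X) (_ : ∀ i, F i ⊆ E) (_ : ∀ i, IsCompact (F i))
    (_ : ∀ i, IsConnected (F i)) (_ : ∀ i, EMetric.diam (F i) ≤ δ)
    (_ : Pairwise (Function.onFun Disjoint F)),
    ∑ i, EMetric.diam (F i)

/-- The diameter of a connected set is at most its one-dimensional Hausdorff measure. -/
lemma diam_le_h1_of_isConnected {X : Type*} [MetricSpace X] [MeasurableSpace X] [BorelSpace X]
    {s : Set X} (hs : IsConnected s) : EMetric.diam s ≤ μH[1] s := by
  apply EMetric.diam_le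
  intro x hx y hy
  have hlip : LipschitzWith 1 (dist x) := LipschitzWith.dist_right x
  have himg : μH[1] (dist x '' s) ≤ μH[1] s := by
    simpa using hlip.hausdorffMeasure_image_le one_pos.le s
  have hconn : IsPreconnected (dist x '' s) :=
    (hs.image _ hlip.continuous.continuousOn).isPreconnected
  have hIcc : Set.Icc 0 (dist x y) ⊆ dist x '' s :=
    hconn.Icc_subset ⟨x, hx, dist_self x⟩ ⟨y, hy, rfl⟩
  have : edist x y ≤ μH[1] (dist x '' s) := by
    calc edist x y = volume (Set.Icc 0 (dist x y)) := by
          rw [Real.volume_Icc, edist_dist]; simp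
      _ = μH[1] (Set.Icc 0 (dist x y)) := by rw [hausdorffMeasure_real]
      _ ≤ μH[1] (dist x '' s) := measure_mono hIcc
  exact this.trans himg

theorem stmt1 {X : Type*} [MetricSpace X] [MeasurableSpace X] [BorelSpace X]
    (E : Set X) (δ : ℝ≥0∞) (hδ : 0 < δ) :
    Ldelta E δ ≤ μH[1] E := by
  rw [Ldelta]
  refine iSup_le fun n => iSup_le fun F => iSup_le fun hE => iSup_le fun hc =>
    iSup_le fun hconn => iSup_le fun _ => iSup_le fun hd => ?_
  calc ∑ i, EMetric.diam (F i) ≤ ∑ i, μH[1] (F i) :=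
        Finset.sum_le_sum fun i _ => diam_le_h1_of_isConnected (hconn i)
    _ = μH[1] (⋃ i, F i) := by
        rw [measure_iUnion hd fun i => (hc i).measurableSet, tsum_fintype]
    _ ≤ μH[1] E := measure_mono (Set.iUnion_subset hE)
end

section
/- Let U be a nonempty compact subset of a metric space X, and let F be a connected component of U. If F does not meet the topological boundary of U (in X), then F is a connected component of X. -/
open Set

theorem stmt2 {X : Type*} [MetricSpace X] (U : Set X) (hU : IsCompact U)
    (x : X) (hx : x ∈ U)
    (hF : connectedComponentIn U x ∩ frontier U = ∅) :
    connectedComponentIn U x = connectedComponent x := by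
  have hUclosed : IsClosed U := hU.isClosed
  haveI : CompactSpace U := isCompact_iff_compactSpace.1 hU
  set x' : U := ⟨x, hx⟩
  -- the preimage of the frontier inside the subtype
  set Fr : Set U := Subtype.val ⁻¹' frontier U with hFr
  have hFrClosed : IsClosed Fr := isClosed_frontier.preimage continuous_subtype_val
  -- connectedComponent x' is disjoint from Fr
  have hdisj : connectedComponent x' ⊆ Frᶜ := by
    intro y hy hyFr
    have : (y : X) ∈ connectedComponentIn U x ∩ frontier U := by
      refine ⟨?_, hyFr⟩
      rw [connectedComponentIn_eq_image hx]
      exact mem_image_of_mem _ hy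
    rw [hF] at this
    exact this
  -- family of clopen neighborhoods of x'
  let N := { s : Set U // IsClopen s ∧ x' ∈ s }
  haveI : Nonempty N := ⟨⟨univ, isClopen_univ, mem_univ x'⟩⟩
  have hcomp : connectedComponent x' = ⋂ s : N, (s : Set U) :=
    connectedComponent_eq_iInter_isClopen x'
  have hdir : Directed (· ⊇ ·) fun s : N => (s : Set U) := by
    rintro ⟨s, hs, hxs⟩ ⟨t, ht, hxt⟩
    exact ⟨⟨s ∩ t, hs.inter ht, ⟨hxs, hxt⟩⟩, inter_subset_left, inter_subset_right⟩
  obtain ⟨⟨s, hsClopen, hxs⟩, hsFr⟩ :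
      ∃ s : N, (s : Set U) ⊆ Frᶜ := by
    refine exists_subset_nhds_of_isCompact' hdir
      (fun s => s.2.1.1.isCompact) (fun s => s.2.1.1) fun y hy => ?_
    rw [← hcomp] at hy
    exact (hFrClosed.isOpen_compl).mem_nhds (hdisj hy)
  -- K is the image of s in X
  set K : Set X := Subtype.val '' s with hK
  have hKU : K ⊆ U := by rintro _ ⟨y, -, rfl⟩; exact y.2
  have hKint : K ⊆ interior U := by
    rintro _ ⟨y, hy, rfl⟩
    have : (y : X) ∉ frontier U := fun h => hsFr hy h
    rcases (hUclosed.closure_subset_iff.mpr subset_rfl) with _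
    have hycl : (y : X) ∈ closure U := subset_closure y.2
    by_contra hint
    exact this ⟨hycl, hint⟩
  have hKclosed : IsClosed K :=
    hUclosed.isClosedEmbedding_subtypeVal.isClosed_iff_image_isClosed.1 hsClopen.1
  have hKopen : IsOpen K := by
    obtain ⟨V, hV, hVs⟩ := isOpen_induced_iff.mp hsClopen.2
    have hKeq : K = V ∩ interior U := by
      apply Subset.antisymm
      · intro z hz
        refine ⟨?_, hKint hz⟩
        rcases hz with ⟨y, hy, rfl⟩
        rw [← hVs] at hy
        exact hy
      · rintro z ⟨hzV, hzint⟩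
        have hzU : z ∈ U := interior_subset hzint
        refine ⟨⟨z, hzU⟩, ?_, rfl⟩
        rw [← hVs]
        exact hzV
    rw [hKeq]
    exact hV.inter isOpen_interior
  have hxK : x ∈ K := ⟨x', hxs, rfl⟩
  -- connectedComponent x ⊆ K ⊆ U
  have hccK : connectedComponent x ⊆ K :=
    IsClopen.connectedComponent_subset ⟨hKclosed, hKopen⟩ hxK
  apply Subset.antisymm
  · simpa [connectedComponentIn_univ] using
      connectedComponentIn_mono x (subset_univ U)
  · exact isPreconnected_connectedComponent.subset_connectedComponentIn
      mem_connectedComponent (hccK.trans hKU)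
end

section
/- Let E be a connected subset of a metric space X, let B = B(x,r) be a closed ball centered at a point x ∈ E such that E ∩ B is compact and E \ B is nonempty, and let F be the connected component of E ∩ B containing x. Then H^1(F) ≥ r (and hence H^1(E ∩ B) ≥ r). -/
open MeasureTheory Metric ENNReal Set

theorem stmt3 {X : Type*} [MetricSpace X] [MeasurableSpace X] [BorelSpace X]
    (E : Set X) (hE : IsConnected E) (x : X) (hx : x ∈ E) (r : ℝ) (hr : 0 < r)
    (hcomp : IsCompact (E ∩ closedBall x r))
    (hne : (E \ closedBall x r).Nonempty) :
    ENNReal.ofReal r ≤ μH[1] (connectedComponentIn (E ∩ closedBall x r) x) ∧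
      ENNReal.ofReal r ≤ μH[1] (E ∩ closedBall x r) := by
  set K : Set X := E ∩ closedBall x r with hKdef
  have hxK : x ∈ K := ⟨hx, mem_closedBall_self hr.le⟩
  set F : Set X := connectedComponentIn K x with hFdef
  have hFsub : F ⊆ K := connectedComponentIn_subset _ _
  -- Step A: the component touches the sphere
  have hsphere : ∃ y ∈ F, dist y x = r := by
    by_contra hcon
    push_neg at hcon
    haveI : CompactSpace K := isCompact_iff_compactSpace.mp hcomp
    set x' : K := ⟨x, hxK⟩ with hx'
    have himg : F = Subtype.val '' connectedComponent x' :=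
      connectedComponentIn_eq_image hxK
    -- the sphere inside K, as a set of the subtype
    set S : Set K := Subtype.val ⁻¹' sphere x r with hSdef
    have hScl : IsClosed S := isClosed_sphere.preimage continuous_subtype_val
    have hdisj : Disjoint (connectedComponent x') S := by
      rw [Set.disjoint_left]
      intro y hy hyS
      exact hcon y (himg ▸ ⟨y, hy, rfl⟩) hyS
    -- find a clopen set C in K containing x' and disjoint from S
    obtain ⟨C, hCclopen, hxC, hCS⟩ :
        ∃ C : Set K, IsClopen C ∧ x' ∈ C ∧ Disjoint C S := by
      have H1 := hScl.isCompact.inter_iInter_nonempty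
        (fun s : { s : Set K // IsClopen s ∧ x' ∈ s } => (s : Set K))
        (fun s => s.2.1.1)
      rw [← not_disjoint_iff_nonempty_inter, imp_not_comm, not_forall] at H1
      have hdisj2 : Disjoint S (⋂ s : { s : Set K // IsClopen s ∧ x' ∈ s }, (s : Set K)) := by
        rw [connectedComponent_eq_iInter_isClopen] at hdisj
        exact hdisj.symm
      obtain ⟨u, hu⟩ := H1 hdisj2
      refine ⟨⋂ s ∈ u, (s : Set K), isClopen_biInter_finset fun s _ => s.2.1,
        Set.mem_iInter₂.2 fun s _ => s.2.2, ?_⟩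
      rw [Set.not_nonempty_iff_eq_empty] at hu
      rw [Set.disjoint_iff_inter_eq_empty, Set.inter_comm]
      exact hu
    -- push C down to X
    set D : Set X := Subtype.val '' C with hDdef
    have hxD : x ∈ D := ⟨x', hxC, rfl⟩
    have hDK : D ⊆ K := by rintro y ⟨c, _, rfl⟩; exact c.2
    have hDball : D ⊆ ball x r := by
      rintro y ⟨c, hc, rfl⟩
      have h1 : dist (c : X) x ≤ r := mem_closedBall.mp c.2.2
      have h2 : dist (c : X) x ≠ r := by
        intro h
        exact (Set.disjoint_left.mp hCS hc) (by simpa [hSdef, mem_sphere] using h)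
      exact mem_ball.mpr (lt_of_le_of_ne h1 h2)
    -- D is closed in X
    have hDclosed : IsClosed D :=
      (hCclopen.1.isCompact.image continuous_subtype_val).isClosed
    -- C is the preimage of an open set U
    obtain ⟨U, hUopen, hUC⟩ : ∃ U : Set X, IsOpen U ∧ Subtype.val ⁻¹' U = C := by
      have := hCclopen.2
      rwa [isOpen_induced_iff] at this
    have hDeq : D = U ∩ ball x r ∩ E := by
      apply Set.Subset.antisymm
      · rintro y ⟨c, hc, rfl⟩
        refine ⟨⟨?_, hDball ⟨c, hc, rfl⟩⟩, c.2.1⟩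
        rw [← hUC] at hc; exact hc
      · rintro y ⟨⟨hyU, hyb⟩, hyE⟩
        have hyK : y ∈ K := ⟨hyE, ball_subset_closedBall hyb⟩
        exact ⟨⟨y, hyK⟩, by rw [← hUC]; exact hyU, rfl⟩
    -- contradiction with connectedness of E
    obtain ⟨z, hzE, hzB⟩ := hne
    have hpre := hE.isPreconnected
    have h1 : IsOpen (U ∩ ball x r) := hUopen.inter isOpen_ball
    have h2 : IsOpen Dᶜ := hDclosed.isOpen_compl
    have hcover : E ⊆ (U ∩ ball x r) ∪ Dᶜ := by
      intro y hyE
      by_cases hyD : y ∈ D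
      · left; exact (hDeq ▸ hyD).1
      · right; exact hyD
    have hnon1 : (E ∩ (U ∩ ball x r)).Nonempty :=
      ⟨x, hx, (hDeq ▸ hxD).1⟩
    have hnon2 : (E ∩ Dᶜ).Nonempty :=
      ⟨z, hzE, fun hzD => hzB (hDK hzD).2⟩
    obtain ⟨w, hwE, hw1, hw2⟩ := hpre _ _ h1 h2 hcover hnon1 hnon2
    exact hw2 (hDeq ▸ ⟨hw1, hwE⟩)
  -- Step B: push forward by the 1-Lipschitz map `dist · x`
  obtain ⟨y, hyF, hyr⟩ := hsphere
  have hlip : LipschitzWith 1 (fun z => dist z x) := LipschitzWith.dist_left x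
  have hFpre : IsPreconnected F := isPreconnected_connectedComponentIn
  have himgpre : IsPreconnected ((fun z => dist z x) '' F) :=
    hFpre.image _ (hlip.continuous.continuousOn)
  have hxF : x ∈ F := mem_connectedComponentIn hxK
  have h0 : (0 : ℝ) ∈ (fun z => dist z x) '' F := ⟨x, hxF, by simp⟩
  have hrmem : r ∈ (fun z => dist z x) '' F := ⟨y, hyF, hyr⟩
  have hIcc : Set.Icc (0 : ℝ) r ⊆ (fun z => dist z x) '' F :=
    himgpre.Icc_subset h0 hrmem
  have key : ENNReal.ofReal r ≤ μH[1] F := by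
    have h1 : ENNReal.ofReal r = μH[1] (Set.Icc (0 : ℝ) r) := by
      rw [MeasureTheory.hausdorffMeasure_real, Real.volume_Icc, sub_zero]
    have h2 : μH[1] (Set.Icc (0 : ℝ) r) ≤ μH[1] ((fun z => dist z x) '' F) :=
      measure_mono hIcc
    have h3 : μH[1] ((fun z => dist z x) '' F) ≤ (1 : NNReal) ^ (1 : ℝ) * μH[1] F :=
      hlip.hausdorffMeasure_image_le zero_le_one F
    rw [h1]
    refine h2.trans (h3.trans ?_)
    simp
  exact ⟨key, key.trans (measure_mono hFsub)⟩
end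

section
/- Let E be a connected and locally compact subset of a metric space X. Then for every δ > 0, the pre-measure H^1_δ(E) is at most L_δ(E). -/
open MeasureTheory ENNReal

/-- The pre-measure `H¹_δ(E)`: infimum of `∑ diam Eᵢ` over countable covers of `E`
by sets of diameter at most `δ`. -/
noncomputable def Hdelta {X : Type*} [MetricSpace X] (δ : ℝ≥0∞) (E : Set X) : ℝ≥0∞ :=
  ⨅ (F : ℕ → Set X) (_ : E ⊆ ⋃ n, F n) (_ : ∀ n, EMetric.diam (F n) ≤ δ),
    ∑' n, EMetric.diam (F n)

open Set Metric
open scoped NNReal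

section Aux

variable {Y : Type*} [MetricSpace Y]

lemma Hdelta_le_cover {δ : ℝ≥0∞} {E : Set Y} (F : ℕ → Set Y)
    (hc : E ⊆ ⋃ n, F n) (hd : ∀ n, EMetric.diam (F n) ≤ δ) :
    Hdelta δ E ≤ ∑' n, EMetric.diam (F n) :=
  iInf_le_of_le F (iInf_le_of_le hc (iInf_le _ hd))

lemma sum_le_Ldelta {δ : ℝ≥0∞} {E : Set Y} (n : ℕ) (F : Fin n → Set Y)
    (h0 : ∀ i, F i ⊆ E) (h1 : ∀ i, IsCompact (F i)) (h2 : ∀ i, IsConnected (F i))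
    (h3 : ∀ i, EMetric.diam (F i) ≤ δ) (h4 : Pairwise (Function.onFun Disjoint F)) :
    ∑ i, EMetric.diam (F i) ≤ Ldelta E δ :=
  le_iSup_of_le n <| le_iSup_of_le F <| le_iSup_of_le h0 <| le_iSup_of_le h1 <|
    le_iSup_of_le h2 <| le_iSup_of_le h3 <| le_iSup_of_le h4 le_rfl

lemma list_sum_le_Ldelta {δ : ℝ≥0∞} (l : List (Set Y))
    (h1 : ∀ J ∈ l, IsCompact J) (h2 : ∀ J ∈ l, IsConnected J)
    (h3 : ∀ J ∈ l, EMetric.diam J ≤ δ) (h4 : l.Pairwise Disjoint) :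
    (l.map EMetric.diam).sum ≤ Ldelta (univ : Set Y) δ := by
  have hmem : ∀ i : Fin l.length, l[(i : ℕ)] ∈ l := fun i => List.getElem_mem _
  have hsum : (l.map EMetric.diam).sum = ∑ i : Fin l.length, EMetric.diam l[(i : ℕ)] := by
    rw [← List.ofFn_getElem_eq_map l EMetric.diam, List.sum_ofFn]
  rw [hsum]
  refine sum_le_Ldelta l.length (fun i => l[(i : ℕ)]) (fun i => subset_univ _)
    (fun i => h1 _ (hmem i)) (fun i => h2 _ (hmem i)) (fun i => h3 _ (hmem i)) ?_
  intro i j hij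
  have hp := List.pairwise_iff_getElem.1 h4
  rcases lt_or_gt_of_ne (Fin.val_ne_of_ne hij) with h | h
  · exact hp i j i.2 j.2 h
  · exact (hp j i j.2 i.2 h).symm

/-- admissible continuum w.r.t. a list of previously chosen continua -/
def Adm (δ' : ℝ≥0∞) (l : List (Set Y)) (K : Set Y) : Prop :=
  IsCompact K ∧ IsConnected K ∧ EMetric.diam K ≤ δ' ∧ ∀ J ∈ l, Disjoint K J

noncomputable def Ssup (δ' : ℝ≥0∞) (l : List (Set Y)) : ℝ≥0∞ :=
  ⨆ K : Set Y, ⨆ (_ : Adm δ' l K), EMetric.diam K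

lemma diam_le_Ssup {δ' : ℝ≥0∞} {l : List (Set Y)} {K : Set Y} (h : Adm δ' l K) :
    EMetric.diam K ≤ Ssup δ' l :=
  le_iSup₂ (f := fun K (_ : Adm δ' l K) => EMetric.diam K) K h

lemma Ssup_le_delta' (δ' : ℝ≥0∞) (l : List (Set Y)) : Ssup δ' l ≤ δ' :=
  iSup₂_le fun _ h => h.2.2.1

lemma Ssup_anti {δ' : ℝ≥0∞} {l1 l2 : List (Set Y)} (h : ∀ J ∈ l1, J ∈ l2) :
    Ssup δ' l2 ≤ Ssup δ' l1 :=
  iSup₂_le fun K hK => diam_le_Ssup ⟨hK.1, hK.2.1, hK.2.2.1, fun J hJ => hK.2.2.2 J (h J hJ)⟩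

open scoped Classical in
noncomputable def gstep (δ' : ℝ≥0∞) (l : List (Set Y)) : Set Y :=
  if h : ∃ K, Adm δ' l K ∧ Ssup δ' l / 2 < EMetric.diam K then h.choose else ∅

lemma gstep_spec {δ' : ℝ≥0∞} {l : List (Set Y)}
    (h : ∃ K, Adm δ' l K ∧ Ssup δ' l / 2 < EMetric.diam K) :
    Adm δ' l (gstep δ' l) ∧ Ssup δ' l / 2 < EMetric.diam (gstep δ' l) := by
  classical
  rw [gstep, dif_pos h]
  convert h.choose_spec

noncomputable def glist (δ' : ℝ≥0∞) : ℕ → List (Set Y)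
  | 0 => []
  | n + 1 => gstep δ' (glist δ' n) :: glist δ' n

lemma mem_glist (δ' : ℝ≥0∞) (n : ℕ) (J : Set Y) :
    J ∈ glist δ' n ↔ ∃ j, j < n ∧ J = gstep δ' (glist δ' j) := by
  induction n with
  | zero => simp [glist]
  | succ n ih =>
    simp only [glist, List.mem_cons, ih]
    constructor
    · rintro (rfl | ⟨j, hj, rfl⟩)
      · exact ⟨n, Nat.lt_succ_self n, rfl⟩
      · exact ⟨j, hj.trans (Nat.lt_succ_self n), rfl⟩
    · rintro ⟨j, hj, rfl⟩
      rcases Nat.lt_succ_iff_lt_or_eq.1 hj with h | rfl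
      · exact Or.inr ⟨j, h, rfl⟩
      · exact Or.inl rfl

lemma sum_glist (δ' : ℝ≥0∞) (n : ℕ) :
    ((glist (Y := Y) δ' n).map EMetric.diam).sum
      = ∑ i ∈ Finset.range n, EMetric.diam (gstep (Y := Y) δ' (glist δ' i)) := by
  induction n with
  | zero => simp [glist]
  | succ n ih => simp [glist, Finset.sum_range_succ, ih]; ring

lemma ballcpt {Z : Type*} [MetricSpace Z] [LocallyCompactSpace Z] (x : Z) :
    ∃ s : ℝ, 0 < s ∧ ∀ t : ℝ, t ≤ s → IsCompact (closedBall x t) := by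
  obtain ⟨C, hCc, hC⟩ := exists_compact_mem_nhds x
  obtain ⟨s, hs, hsub⟩ := Metric.nhds_basis_closedBall.mem_iff.1 hC
  exact ⟨s, hs, fun t ht => hCc.of_isClosed_subset isClosed_closedBall
    ((closedBall_subset_closedBall ht).trans hsub)⟩

end Aux

open Set Metric

/-- Boundary bumping: the connected component of `x` in a compact proper closed ball
reaches the sphere. -/
lemma bump {Y : Type*} [MetricSpace Y] [ConnectedSpace Y]
    {x : Y} {t : ℝ} (ht : 0 < t) (hC : IsCompact (closedBall x t))
    (hne : closedBall x t ≠ univ) :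
    ∃ Q : Set Y, x ∈ Q ∧ IsCompact Q ∧ IsConnected Q ∧ Q ⊆ closedBall x t ∧
      ENNReal.ofReal t ≤ EMetric.diam Q := by
  set C := closedBall x t with hCdef
  have hCcl : IsClosed C := isClosed_closedBall
  have hxC : x ∈ C := mem_closedBall_self ht.le
  haveI : CompactSpace C := isCompact_iff_compactSpace.mp hC
  set x' : C := ⟨x, hxC⟩
  set Q : Set Y := connectedComponentIn C x with hQdef
  have hQim : Q = (↑) '' connectedComponent x' := connectedComponentIn_eq_image hxC
  have hQsub : Q ⊆ C := connectedComponentIn_subset _ _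
  have hxQ : x ∈ Q := mem_connectedComponentIn hxC
  have hQcpt : IsCompact Q := by
    rw [hQim]
    exact (isClosed_connectedComponent.isCompact).image continuous_subtype_val
  have hQconn : IsConnected Q := ⟨⟨x, hxQ⟩, isPreconnected_connectedComponentIn⟩
  refine ⟨Q, hxQ, hQcpt, hQconn, hQsub, ?_⟩
  -- It suffices to find a point of `Q` on the sphere.
  have key : ∃ p ∈ Q, p ∈ frontier C := by
    by_contra h
    push_neg at h
    -- work in the subtype
    set Fr : Set C := (↑) ⁻¹' frontier C with hFrdef
    have hFrcl : IsClosed Fr := isClosed_frontier.preimage continuous_subtype_val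
    have hFrcpt : IsCompact Fr := hFrcl.isCompact
    have hiI : connectedComponent x' = ⋂ Z : { Z : Set C // IsClopen Z ∧ x' ∈ Z }, ↑Z :=
      connectedComponent_eq_iInter_isClopen x'
    -- the clopen complements cover Fr
    have hcover : Fr ⊆ ⋃ Z : { Z : Set C // IsClopen Z ∧ x' ∈ Z }, (↑Z : Set C)ᶜ := by
      intro z hz
      by_contra hz'
      simp only [mem_iUnion, mem_compl_iff, not_exists, not_not] at hz'
      have : z ∈ connectedComponent x' := by rw [hiI]; exact mem_iInter.2 fun Z => hz' Z
      exact h z (hQim ▸ ⟨z, this, rfl⟩) hz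
    obtain ⟨fs, hfs⟩ := hFrcpt.elim_finite_subcover
      (fun Z : { Z : Set C // IsClopen Z ∧ x' ∈ Z } => (↑Z : Set C)ᶜ)
      (fun Z => Z.2.1.isClosed.isOpen_compl) hcover
    set V' : Set C := ⋂ Z ∈ fs, (↑Z : Set C) with hV'def
    have hxV' : x' ∈ V' := mem_iInter₂.2 fun Z _ => Z.2.2
    have hV'cl : IsClosed V' := isClosed_biInter fun Z _ => Z.2.1.isClosed
    have hV'op : IsOpen V' := isOpen_biInter_finset fun Z _ => Z.2.1.isOpen
    have hV'Fr : V' ∩ Fr = ∅ := by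
      ext z; simp only [mem_inter_iff, mem_empty_iff_false, iff_false, not_and]
      intro hzV hzFr
      obtain ⟨Z, hZfs, hzZ⟩ := mem_iUnion₂.1 (hfs hzFr)
      exact hzZ (mem_iInter₂.1 hzV Z hZfs)
    set V : Set Y := (↑) '' V' with hVdef
    have hxV : x ∈ V := ⟨x', hxV', rfl⟩
    have hVC : V ⊆ C := by rintro _ ⟨z, _, rfl⟩; exact z.2
    have hVcl : IsClosed V := (hV'cl.isCompact.image continuous_subtype_val).isClosed
    have hVfr : ∀ p ∈ V, p ∉ frontier C := by
      rintro _ ⟨z, hzV', rfl⟩ hfr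
      have : z ∈ V' ∩ Fr := ⟨hzV', hfr⟩
      rw [hV'Fr] at this; exact this
    have hVint : V ⊆ interior C := by
      intro v hv
      by_contra hni
      exact hVfr v hv (hCcl.frontier_eq ▸ (⟨hVC hv, hni⟩ : v ∈ C \ interior C))
    have hVop : IsOpen V := by
      obtain ⟨U, hU, hUV⟩ := isOpen_induced_iff.1 hV'op
      have himg : V = U ∩ C := by
        rw [hVdef, ← hUV, Subtype.image_preimage_coe]
        exact inter_comm _ _
      have : V = U ∩ interior C := by
        apply Subset.antisymm
        · exact fun v hv => ⟨(himg ▸ hv).1, hVint hv⟩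
        · intro v hv; rw [himg]; exact ⟨hv.1, interior_subset hv.2⟩
      rw [this]
      exact hU.inter isOpen_interior
    obtain ⟨y, hy⟩ := (ne_univ_iff_exists_notMem C).1 hne
    rcases isClopen_iff.1 ⟨hVcl, hVop⟩ with h0 | h1
    · rw [h0] at hxV; exact hxV
    · rw [h1] at hVC; exact hy (hVC (mem_univ y))
  obtain ⟨p, hpQ, hpfr⟩ := key
  have hpC : p ∈ C := hCcl.closure_eq ▸ hpfr.1
  have hpd : dist x p = t := by
    have h1 : dist p x ≤ t := mem_closedBall.1 hpC
    have h2 : ¬ p ∈ ball x t := fun hb => hpfr.2 (mem_interior_iff_mem_nhds.2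
      (Filter.mem_of_superset (isOpen_ball.mem_nhds hb) ball_subset_closedBall))
    have h3 : ¬ dist p x < t := fun hlt => h2 (mem_ball.2 hlt)
    rw [dist_comm]; linarith [lt_or_ge (dist p x) t |>.resolve_left h3, h1]
  calc ENNReal.ofReal t = edist x p := by rw [edist_dist, hpd]
    _ ≤ EMetric.diam Q := EMetric.edist_le_diam_of_mem hxQ hpQ


section Find
variable {Y : Type*} [MetricSpace Y] [ConnectedSpace Y] [LocallyCompactSpace Y]

lemma diam_closedBall_le (x : Y) (t : ℝ) (ht : 0 ≤ t) :
    EMetric.diam (closedBall x t) ≤ ENNReal.ofReal (2 * t) := by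
  refine EMetric.diam_le fun a ha b hb => ?_
  rw [edist_dist]
  refine ENNReal.ofReal_le_ofReal ?_
  have h1 : dist a x ≤ t := mem_closedBall.1 ha
  have h2 : dist b x ≤ t := mem_closedBall.1 hb
  calc dist a b ≤ dist a x + dist x b := dist_triangle _ _ _
    _ ≤ 2 * t := by rw [dist_comm x b]; linarith

lemma find_continuum' {y1 y2 : Y} (hy : y1 ≠ y2) (x : Y) {t : ℝ} (ht : 0 < t)
    (ht2 : t < dist y1 y2 / 2) (hcpt : IsCompact (closedBall x t)) :
    ∃ Q : Set Y, x ∈ Q ∧ IsCompact Q ∧ IsConnected Q ∧ Q ⊆ closedBall x t ∧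
      ENNReal.ofReal t ≤ EMetric.diam Q ∧ EMetric.diam Q ≤ ENNReal.ofReal (2 * t) := by
  have hD : 0 < dist y1 y2 := dist_pos.2 hy
  have hne : closedBall x t ≠ univ := by
    have htri : dist y1 y2 ≤ dist y1 x + dist x y2 := dist_triangle _ _ _
    rcases le_or_gt (dist y1 y2 / 2) (dist x y1) with h | h
    · intro hu
      have : y1 ∈ closedBall x t := hu ▸ mem_univ y1
      rw [mem_closedBall, dist_comm] at this
      linarith
    · intro hu
      have : y2 ∈ closedBall x t := hu ▸ mem_univ y2
      rw [mem_closedBall, dist_comm] at this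
      rw [dist_comm] at h
      linarith
  obtain ⟨Q, h1, h2, h3, h4, h5⟩ := bump ht hcpt hne
  exact ⟨Q, h1, h2, h3, h4, h5,
    (EMetric.diam_mono h4).trans (diam_closedBall_le x t ht.le)⟩

lemma can_extend {r0 : ℝ≥0} (hr0 : 0 < r0) {y1 y2 : Y} (hy : y1 ≠ y2)
    (l : List (Set Y)) (hcpt : ∀ J ∈ l, IsCompact J)
    {x : Y} (hx : ∀ J ∈ l, x ∉ J) :
    ∃ K, Adm (r0 : ℝ≥0∞) l K ∧ Ssup (r0 : ℝ≥0∞) l / 2 < EMetric.diam K := by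
  have hD : 0 < dist y1 y2 := dist_pos.2 hy
  -- the union of the list is closed and misses x
  set W : Set Y := ⋃ J ∈ {J | J ∈ l}, J with hWdef
  have hWcl : IsClosed W := (List.finite_toSet l).isClosed_biUnion
    (fun J hJ => (hcpt J hJ).isClosed)
  have hxW : x ∈ Wᶜ := by
    simp only [hWdef, mem_compl_iff, mem_iUnion, not_exists]
    exact fun J hJ => hx J hJ
  obtain ⟨ρ, hρ, hball⟩ := Metric.isOpen_iff.1 hWcl.isOpen_compl x hxW
  obtain ⟨s0, hs0, hs0c⟩ := ballcpt x
  set t : ℝ := min (min (ρ / 2) s0) (min ((r0 : ℝ) / 2) (dist y1 y2 / 4)) with htdef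
  have ht : 0 < t := by
    have : (0:ℝ) < (r0 : ℝ) := hr0
    refine lt_min (lt_min (by linarith) hs0) (lt_min (by linarith) (by linarith))
  have ht2 : t < dist y1 y2 / 2 := lt_of_le_of_lt
    ((min_le_right _ _).trans (min_le_right _ _)) (by linarith)
  have htc : IsCompact (closedBall x t) := hs0c t ((min_le_left _ _).trans (min_le_right _ _))
  obtain ⟨Q, hxQ, hQc, hQconn, hQsub, hQd1, hQd2⟩ := find_continuum' hy x ht ht2 htc
  have hAdm : Adm (r0 : ℝ≥0∞) l Q := by
    refine ⟨hQc, hQconn, ?_, ?_⟩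
    · refine hQd2.trans ?_
      have h2t : 2 * t ≤ (r0 : ℝ) := by
        have := (min_le_right (min (ρ/2) s0) _).trans
          (min_le_left ((r0:ℝ)/2) (dist y1 y2 / 4)) 
        have h : t ≤ (r0:ℝ)/2 := this
        linarith
      calc ENNReal.ofReal (2 * t) ≤ ENNReal.ofReal (r0 : ℝ) := ENNReal.ofReal_le_ofReal h2t
        _ = (r0 : ℝ≥0∞) := ENNReal.ofReal_coe_nnreal
    · intro J hJ
      rw [Set.disjoint_left]
      intro z hzQ hzJ
      have hzb : z ∈ ball x ρ := by
        have := hQsub hzQ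
        rw [mem_closedBall, dist_comm] at this
        rw [mem_ball, dist_comm]
        have htρ : t < ρ := lt_of_le_of_lt ((min_le_left _ _).trans (min_le_left _ _))
          (by linarith)
        linarith
      have := hball hzb
      simp only [hWdef, mem_compl_iff, mem_iUnion, not_exists] at this
      exact this J hJ hzJ
  -- positivity of the sup and choice of a near maximizer
  have hpos : (0 : ℝ≥0∞) < Ssup (r0 : ℝ≥0∞) l := by
    calc (0 : ℝ≥0∞) < ENNReal.ofReal t := by simpa using ht
      _ ≤ EMetric.diam Q := hQd1
      _ ≤ Ssup (r0 : ℝ≥0∞) l := diam_le_Ssup hAdm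
  have hfin : Ssup (r0 : ℝ≥0∞) l ≠ ⊤ :=
    ((Ssup_le_delta' _ _).trans_lt ENNReal.coe_lt_top).ne
  have hhalf : Ssup (r0 : ℝ≥0∞) l / 2 < Ssup (r0 : ℝ≥0∞) l :=
    ENNReal.half_lt_self hpos.ne' hfin
  rw [Ssup] at hhalf
  obtain ⟨K, hK⟩ := lt_iSup_iff.1 hhalf
  obtain ⟨hKAdm, hKlt⟩ := lt_iSup_iff.1 hK
  exact ⟨K, hKAdm, hKlt⟩

end Find
theorem core {Y : Type*} [MetricSpace Y] [ConnectedSpace Y] [LocallyCompactSpace Y]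
    (δ : ℝ≥0∞) (hδ : 0 < δ) :
    Hdelta δ (univ : Set Y) ≤ Ldelta (univ : Set Y) δ := by
  classical
  by_cases hsing : ∀ y z : Y, y = z
  · have hdiam : EMetric.diam (univ : Set Y) = 0 :=
      EMetric.diam_subsingleton fun a _ b _ => hsing a b
    have h := Hdelta_le_cover (δ := δ) (E := (univ : Set Y)) (fun _ => univ)
      (by intro x _; exact mem_iUnion.2 ⟨0, mem_univ x⟩)
      (fun n => by rw [hdiam]; exact zero_le)
    calc Hdelta δ (univ : Set Y) ≤ ∑' _ : ℕ, EMetric.diam (univ : Set Y) := h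
      _ = 0 := by simp [hdiam]
      _ ≤ Ldelta (univ : Set Y) δ := zero_le
  push_neg at hsing
  obtain ⟨y1, y2, hy⟩ := hsing
  obtain ⟨r0, hr0, h2r0⟩ : ∃ r0 : ℝ≥0, 0 < r0 ∧ ((2 * r0 : ℝ≥0) : ℝ≥0∞) ≤ δ := by
    rcases eq_or_ne δ ⊤ with rfl | hδt
    · exact ⟨1, one_pos, le_top⟩
    · refine ⟨δ.toNNReal / 2, half_pos (ENNReal.toNNReal_pos hδ.ne' hδt), ?_⟩
      have : (2 : ℝ≥0) * (δ.toNNReal / 2) = δ.toNNReal := by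
        rw [mul_div_cancel₀]; exact two_ne_zero
      rw [this, ENNReal.coe_toNNReal hδt]
  set δ' : ℝ≥0∞ := (r0 : ℝ≥0∞) with hδ'def
  have hδ'δ : δ' ≤ δ := by
    refine le_trans ?_ h2r0
    rw [hδ'def]
    refine ENNReal.coe_le_coe.2 ?_
    calc r0 = 1 * r0 := (one_mul r0).symm
      _ ≤ 2 * r0 := mul_le_mul_left one_le_two r0
  set L := Ldelta (univ : Set Y) δ with hLdef
  rcases eq_or_ne L ⊤ with hLtop | hLfin
  · exact hLtop ▸ le_top
  -- the invariant
  have hGood : ∀ n : ℕ, (∀ m, m < n → ∃ x : Y, ∀ J ∈ glist (Y := Y) δ' m, x ∉ J) →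
      (∀ J ∈ glist (Y := Y) δ' n, IsCompact J ∧ IsConnected J ∧ EMetric.diam J ≤ δ') ∧
        (glist (Y := Y) δ' n).Pairwise Disjoint := by
    intro n
    induction n with
    | zero => intro _; simp [glist]
    | succ n ih =>
      intro h
      obtain ⟨hprops, hpair⟩ := ih fun m hm => h m (hm.trans (Nat.lt_succ_self n))
      obtain ⟨x, hx⟩ := h n (Nat.lt_succ_self n)
      have hex := can_extend hr0 hy (glist δ' n) (fun J hJ => (hprops J hJ).1) hx
      obtain ⟨⟨hc, hconn, hd, hdisj⟩, _⟩ := gstep_spec hex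
      constructor
      · intro J hJ
        rcases List.mem_cons.1 hJ with rfl | hJ'
        · exact ⟨hc, hconn, hd⟩
        · exact hprops J hJ'
      · exact List.Pairwise.cons hdisj hpair
  by_cases hfin : ∃ n : ℕ, ∀ x : Y, ∃ J ∈ glist (Y := Y) δ' n, x ∈ J
  · -- a finite stage covers everything
    set n := Nat.find hfin with hndef
    have hcov := Nat.find_spec hfin
    have hmin : ∀ m, m < n → ∃ x : Y, ∀ J ∈ glist (Y := Y) δ' m, x ∉ J := by
      intro m hm
      have := Nat.find_min hfin hm
      push_neg at this
      exact this
    obtain ⟨hprops, hpair⟩ := hGood n hmin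
    set F : ℕ → Set Y := fun i => if i < n then gstep δ' (glist δ' i) else ∅ with hFdef
    have hmemF : ∀ i, i < n → gstep (Y := Y) δ' (glist δ' i) ∈ glist (Y := Y) δ' n :=
      fun i hi => (mem_glist δ' n _).2 ⟨i, hi, rfl⟩
    have hcover : (univ : Set Y) ⊆ ⋃ i, F i := by
      intro x _
      obtain ⟨J, hJ, hxJ⟩ := hcov x
      obtain ⟨j, hj, rfl⟩ := (mem_glist δ' n J).1 hJ
      exact mem_iUnion.2 ⟨j, by simp only [hFdef, if_pos hj]; exact hxJ⟩
    have hdiamF : ∀ i, EMetric.diam (F i) ≤ δ := by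
      intro i
      by_cases hi : i < n
      · simp only [hFdef, if_pos hi]
        exact ((hprops _ (hmemF i hi)).2.2).trans hδ'δ
      · simp [hFdef, if_neg hi, EMetric.diam]
    refine (Hdelta_le_cover F hcover hdiamF).trans ?_
    have htsum : ∑' i, EMetric.diam (F i) = ∑ i ∈ Finset.range n, EMetric.diam (F i) := by
      refine tsum_eq_sum ?_
      intro i hi
      simp only [hFdef, if_neg (fun h : i < n => hi (Finset.mem_range.2 h))]
      exact EMetric.diam_empty
    rw [htsum]
    have hsum2 : ∑ i ∈ Finset.range n, EMetric.diam (F i)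
        = ((glist (Y := Y) δ' n).map EMetric.diam).sum := by
      rw [sum_glist]
      refine Finset.sum_congr rfl fun i hi => ?_
      simp only [hFdef, if_pos (Finset.mem_range.1 hi)]
    rw [hsum2]
    exact list_sum_le_Ldelta _ (fun J hJ => (hprops J hJ).1) (fun J hJ => (hprops J hJ).2.1)
      (fun J hJ => ((hprops J hJ).2.2).trans hδ'δ) hpair
  · push_neg at hfin
    have hGoodAll : ∀ n, (∀ J ∈ glist (Y := Y) δ' n,
          IsCompact J ∧ IsConnected J ∧ EMetric.diam J ≤ δ') ∧
        (glist (Y := Y) δ' n).Pairwise Disjoint := fun n => hGood n fun m _ => hfin m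
    have hex : ∀ n, ∃ K, Adm δ' (glist (Y := Y) δ' n) K ∧
        Ssup δ' (glist (Y := Y) δ' n) / 2 < EMetric.diam K := by
      intro n
      obtain ⟨x, hx⟩ := hfin n
      exact can_extend hr0 hy _ (fun J hJ => ((hGoodAll n).1 J hJ).1) hx
    set s : ℕ → ℝ≥0∞ := fun n => Ssup δ' (glist (Y := Y) δ' n) with hsdef
    set dK : ℕ → ℝ≥0∞ := fun n => EMetric.diam (gstep δ' (glist (Y := Y) δ' n)) with hdKdef
    have hhalf : ∀ n, s n / 2 < dK n := fun n => (gstep_spec (hex n)).2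
    have hsfin : ∀ n, s n ≠ ⊤ := fun n =>
      ((Ssup_le_delta' _ _).trans_lt ENNReal.coe_lt_top).ne
    have hs2 : ∀ n, s n ≤ 2 * dK n := by
      intro n
      calc s n = s n / 2 + s n / 2 := (ENNReal.add_halves _).symm
        _ ≤ dK n + dK n := add_le_add (hhalf n).le (hhalf n).le
        _ = 2 * dK n := (two_mul _).symm
    have hglist_mono : ∀ {m n : ℕ}, m ≤ n →
        ∀ J ∈ glist (Y := Y) δ' m, J ∈ glist (Y := Y) δ' n := by
      intro m n hmn J hJ
      obtain ⟨j, hj, rfl⟩ := (mem_glist δ' m J).1 hJ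
      exact (mem_glist δ' n _).2 ⟨j, hj.trans_le hmn, rfl⟩
    have hsanti : Antitone s := fun m n hmn => Ssup_anti (hglist_mono hmn)
    have hpartial : ∀ n, ∑ i ∈ Finset.range n, dK i ≤ L := by
      intro n
      rw [show ∑ i ∈ Finset.range n, dK i
          = ((glist (Y := Y) δ' n).map EMetric.diam).sum from (sum_glist δ' n).symm]
      exact list_sum_le_Ldelta _ (fun J hJ => ((hGoodAll n).1 J hJ).1)
        (fun J hJ => ((hGoodAll n).1 J hJ).2.1)
        (fun J hJ => (((hGoodAll n).1 J hJ).2.2).trans hδ'δ) (hGoodAll n).2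
    have htsumdK : ∑' n, dK n ≤ L := ENNReal.tsum_le_of_sum_range_le hpartial
    have htsums : ∑' n, s n ≤ 2 * L := by
      calc ∑' n, s n ≤ ∑' n, 2 * dK n := ENNReal.tsum_le_tsum hs2
        _ = 2 * ∑' n, dK n := ENNReal.tsum_mul_left
        _ ≤ 2 * L := mul_le_mul_right htsumdK 2
    have htsums_ne : ∑' n, s n ≠ ⊤ :=
      (htsums.trans_lt (ENNReal.mul_lt_top (by norm_num) hLfin.lt_top)).ne
    have hkey : ∀ c : ℝ≥0, 0 < c → ∀ N : ℕ,
        ∃ n, N ≤ n ∧ ((n + 1 : ℕ) : ℝ≥0∞) * s n < (c : ℝ≥0∞) := by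
      intro c hc N
      have htail := ENNReal.tendsto_sum_nat_add s htsums_ne
      have hc4 : (0 : ℝ≥0∞) < (c : ℝ≥0∞) / 4 :=
        ENNReal.div_pos (by exact_mod_cast hc.ne') (by norm_num)
      have hev : ∀ᶠ M in Filter.atTop, (∑' k, s (k + M)) < (c : ℝ≥0∞) / 4 :=
        htail.eventually_lt_const hc4
      obtain ⟨M, hM4, hMN⟩ := (hev.and (Filter.eventually_ge_atTop (max N 1))).exists
      have hMN' : N ≤ M := le_trans (le_max_left _ _) hMN
      have hM1 : 1 ≤ M := le_trans (le_max_right _ _) hMN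
      refine ⟨2 * M, le_trans hMN' (by omega : M ≤ 2 * M), ?_⟩
      have hblock : (M : ℝ≥0∞) * s (2 * M) ≤ ∑' k, s (k + M) := by
        have h1 : ∀ i ∈ Finset.range M, s (2 * M) ≤ s (i + M) := by
          intro i hi
          exact hsanti (by have := Finset.mem_range.1 hi; omega)
        calc (M : ℝ≥0∞) * s (2 * M) = (Finset.range M).card • s (2 * M) := by
              rw [Finset.card_range, nsmul_eq_mul]
          _ ≤ ∑ i ∈ Finset.range M, s (i + M) := Finset.card_nsmul_le_sum _ _ _ h1
          _ ≤ ∑' k, s (k + M) := ENNReal.sum_le_tsum _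
      have hfinal : ((2 * M + 1 : ℕ) : ℝ≥0∞) * s (2 * M) ≤ 3 * ((M : ℝ≥0∞) * s (2 * M)) := by
        rw [← mul_assoc]
        refine mul_le_mul_left ?_ _
        have h3 : ((2 * M + 1 : ℕ) : ℝ≥0∞) ≤ ((3 * M : ℕ) : ℝ≥0∞) := by
          exact_mod_cast (by omega : 2 * M + 1 ≤ 3 * M)
        calc ((2 * M + 1 : ℕ) : ℝ≥0∞) ≤ ((3 * M : ℕ) : ℝ≥0∞) := h3
          _ = 3 * (M : ℝ≥0∞) := by push_cast; ring
      have hlast : 3 * ((c : ℝ≥0∞) / 4) < (c : ℝ≥0∞) := by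
        have hcoe : ((c : ℝ≥0∞) / 4) = ((c / 4 : ℝ≥0) : ℝ≥0∞) := by
          rw [ENNReal.coe_div (by norm_num)]; norm_num
        rw [hcoe, show (3 : ℝ≥0∞) = ((3 : ℝ≥0) : ℝ≥0∞) by norm_num, ← ENNReal.coe_mul]
        rw [ENNReal.coe_lt_coe, ← NNReal.coe_lt_coe]
        push_cast
        have hcr : (0 : ℝ) < (c : ℝ) := hc
        linarith
      calc ((2 * M + 1 : ℕ) : ℝ≥0∞) * s (2 * M)
          ≤ 3 * ((M : ℝ≥0∞) * s (2 * M)) := hfinal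
        _ ≤ 3 * ((c : ℝ≥0∞) / 4) := mul_le_mul_right (hblock.trans hM4.le) 3
        _ < (c : ℝ≥0∞) := hlast
    -- it suffices to prove the bound up to `2 * ε`
    suffices hsuff : ∀ ε : ℝ≥0, 0 < ε → Hdelta δ (univ : Set Y) ≤ L + 2 * (ε : ℝ≥0∞) by
      refine ENNReal.le_of_forall_pos_le_add fun ε hε _ => ?_
      refine (hsuff (ε / 2) (half_pos hε)).trans ?_
      have h2 : 2 * ((ε / 2 : ℝ≥0) : ℝ≥0∞) = (ε : ℝ≥0∞) := by
        rw [← ENNReal.coe_ofNat, ← ENNReal.coe_mul, mul_comm, div_mul_cancel₀ _ two_ne_zero]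
      rw [h2]
    intro ε hε
    -- choose the stages
    have hkey' : ∀ N k : ℕ, ∃ n, N ≤ n ∧ ((n + 1 : ℕ) : ℝ≥0∞) * s n
        < ((min (ε / (8 * 2 ^ k)) (r0 / 4) : ℝ≥0) : ℝ≥0∞) := by
      intro N k
      refine hkey _ (lt_min ?_ ?_) N
      · exact div_pos hε (by positivity)
      · exact div_pos hr0 (by norm_num)
    obtain ⟨F, hFlt, hFspec⟩ : ∃ F : ℕ → ℕ, (∀ k, F k < F (k + 1)) ∧
        ∀ k, ((F k + 1 : ℕ) : ℝ≥0∞) * s (F k)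
          < ((min (ε / (8 * 2 ^ k)) (r0 / 4) : ℝ≥0) : ℝ≥0∞) := by
      choose f hf1 hf2 using hkey'
      refine ⟨fun k => Nat.rec (f 0 0) (fun k ih => f (ih + 1) (k + 1)) k, fun k => ?_, fun k => ?_⟩
      · exact Nat.lt_of_lt_of_le (Nat.lt_succ_self _) (hf1 _ (k + 1))
      · cases k with
        | zero => exact hf2 0 0
        | succ k => exact hf2 _ (k + 1)
    have hFmono : StrictMono F := strictMono_nat_of_lt_succ hFlt
    have hFge : ∀ k, k ≤ F k := fun k => hFmono.le_apply
    -- real-valued quantities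
    set sA : ℕ → ℝ≥0 := fun k => (s (F k)).toNNReal with hsAdef
    have hsAcoe : ∀ k, ((sA k : ℝ≥0) : ℝ≥0∞) = s (F k) := fun k => ENNReal.coe_toNNReal (hsfin _)
    have hsAc : ∀ k, ((F k : ℝ≥0) + 1) * sA k ≤ min (ε / (8 * 2 ^ k)) (r0 / 4) := by
      intro k
      have h := (hFspec k).le
      rw [← hsAcoe k] at h
      have heq : (((F k + 1 : ℕ) : ℝ≥0∞)) * ((sA k : ℝ≥0) : ℝ≥0∞)
          = ((((F k : ℝ≥0) + 1) * sA k : ℝ≥0) : ℝ≥0∞) := by push_cast; ring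
      rw [heq] at h
      exact_mod_cast h
    have hsA_le : ∀ k, sA k ≤ min (ε / (8 * 2 ^ k)) (r0 / 4) := by
      intro k
      refine le_trans ?_ (hsAc k)
      exact le_mul_of_one_le_left zero_le (le_add_self.trans_eq rfl |>.trans le_rfl |>.trans le_rfl |>.trans le_rfl)
    set b : ℕ → ℝ≥0 := fun k => min (r0 / 4) (ε / (8 * 2 ^ k * ((F k : ℝ≥0) + 1))) with hbdef
    have hbpos : ∀ k, 0 < b k := by
      intro k
      refine lt_min (div_pos hr0 (by norm_num)) (div_pos hε (by positivity))
    have hb_anti : Antitone b := by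
      intro k m hkm
      refine min_le_min le_rfl ?_
      rw [div_le_div_iff_of_pos_left hε (by positivity) (by positivity)]
      refine mul_le_mul' (mul_le_mul' le_rfl (pow_le_pow_right₀ one_le_two hkm)) ?_
      exact add_le_add (Nat.cast_le.2 (hFmono.monotone hkm)) le_rfl
    have hb_le : ∀ k, b k ≤ r0 / 4 := fun k => min_le_left _ _
    have hbc : ∀ k, ((F k : ℝ≥0) + 1) * b k ≤ ε / (8 * 2 ^ k) := by
      intro k
      have h1 : b k ≤ ε / (8 * 2 ^ k * ((F k : ℝ≥0) + 1)) := min_le_right _ _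
      have hn0 : ((F k : ℝ≥0) + 1) ≠ 0 := by positivity
      calc ((F k : ℝ≥0) + 1) * b k
          ≤ ((F k : ℝ≥0) + 1) * (ε / (8 * 2 ^ k * ((F k : ℝ≥0) + 1))) := mul_le_mul_right h1 _
        _ = ε / (8 * 2 ^ k) := by
            rw [mul_comm, div_mul_eq_mul_div, mul_div_mul_right _ _ hn0]
    set a : ℕ → ℝ≥0 := fun k => sA k + b k with hadef
    have hsA_anti : Antitone sA := fun k m hkm =>
      ENNReal.toNNReal_mono (hsfin _) (hsanti (hFmono.monotone hkm))
    have ha_anti : Antitone a := fun k m hkm => add_le_add (hsA_anti hkm) (hb_anti hkm)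
    have hquarter : (r0 : ℝ≥0) / 4 + r0 / 4 = r0 / 2 := by
      rw [← add_div, ← two_mul, show (4 : ℝ≥0) = 2 * 2 from by norm_num,
        mul_div_mul_left _ _ two_ne_zero]
    have ha_le : ∀ k, a k ≤ r0 / 2 := by
      intro k
      calc a k ≤ r0 / 4 + r0 / 4 :=
            add_le_add ((hsA_le k).trans (min_le_right _ _)) (hb_le k)
        _ = r0 / 2 := hquarter
    -- the index of the block containing i
    have hex2 : ∀ i : ℕ, ∃ k, i ≤ F k := fun i => ⟨i, hFge i⟩
    set kf : ℕ → ℕ := fun i => Nat.find (hex2 i) with hkfdef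
    have hkf_spec : ∀ i, i ≤ F (kf i) := fun i => Nat.find_spec (hex2 i)
    have hkf_min : ∀ i k, i ≤ F k → kf i ≤ k := fun i k h => Nat.find_min' (hex2 i) h
    set εr : ℕ → ℝ≥0 := fun i => a (kf i) with hεrdef
    have hεr_le : ∀ i, εr i ≤ r0 / 2 := fun i => ha_le _
    set Cov : ℕ → Set Y := fun i => Metric.cthickening (εr i : ℝ) (gstep δ' (glist δ' i))
      with hCovdef
    have hcover : (univ : Set Y) ⊆ ⋃ i, Cov i := by
      intro x _
      by_contra hx
      simp only [mem_iUnion, not_exists] at hx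
      have hinf : ∀ i, ((εr i : ℝ≥0) : ℝ≥0∞)
          < EMetric.infEdist x (gstep δ' (glist (Y := Y) δ' i)) := by
        intro i
        have h := hx i
        rw [hCovdef] at h
        simp only [Metric.mem_cthickening_iff, ENNReal.ofReal_coe_nnreal, not_le] at h
        exact h
      obtain ⟨s0, hs0, hs0c⟩ := ballcpt x
      have hD : 0 < dist y1 y2 := dist_pos.2 hy
      -- a k tends to 0
      have haT : Filter.Tendsto (fun k => ((a k : ℝ≥0) : ℝ)) Filter.atTop (nhds 0) := by
        have hbound : ∀ k : ℕ, ((a k : ℝ≥0) : ℝ) ≤ ((ε : ℝ) / 4) * (1 / 2 : ℝ) ^ k := by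
          intro k
          have h1 : sA k ≤ ε / (8 * 2 ^ k) := (hsA_le k).trans (min_le_left _ _)
          have h2 : b k ≤ ε / (8 * 2 ^ k) := by
            refine (min_le_right _ _).trans ?_
            rw [div_le_div_iff_of_pos_left hε (by positivity) (by positivity)]
            exact le_mul_of_one_le_right zero_le (le_add_self.trans le_rfl |>.trans le_rfl)
          have h3 : ((a k : ℝ≥0) : ℝ) ≤ ((ε : ℝ) / (8 * 2 ^ k)) + ((ε : ℝ) / (8 * 2 ^ k)) := by
            have := add_le_add h1 h2
            rw [hadef]
            calc ((sA k + b k : ℝ≥0) : ℝ) ≤ ((ε / (8 * 2 ^ k) + ε / (8 * 2 ^ k) : ℝ≥0) : ℝ) :=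
                  NNReal.coe_le_coe.2 this
              _ = ((ε : ℝ) / (8 * 2 ^ k)) + ((ε : ℝ) / (8 * 2 ^ k)) := by push_cast; ring
          refine h3.trans ?_
          have h4 : ((ε : ℝ) / (8 * 2 ^ k)) + ((ε : ℝ) / (8 * 2 ^ k))
              = ((ε : ℝ) / 4) * (1 / 2 : ℝ) ^ k := by
            rw [one_div, inv_pow]
            field_simp
            ring
          rw [h4]
        have hgeo := (tendsto_pow_atTop_nhds_zero_of_lt_one (by norm_num : (0:ℝ) ≤ 1/2)
          (by norm_num : (1/2:ℝ) < 1)).const_mul ((ε : ℝ) / 4)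
        rw [mul_zero] at hgeo
        exact squeeze_zero (fun k => (a k).coe_nonneg) hbound hgeo
      obtain ⟨k, hk⟩ := (haT.eventually_lt_const
        (lt_min hs0 (by linarith : (0:ℝ) < dist y1 y2 / 4))).exists
      set t : ℝ≥0 := sA k + b k / 2 with htdef
      have htpos : (0 : ℝ≥0) < t := lt_of_lt_of_le (half_pos (hbpos k)) le_add_self
      have htak : t < a k := add_lt_add_right (NNReal.half_lt_self (hbpos k).ne') _
      have htreal : (t : ℝ) < min s0 (dist y1 y2 / 4) :=
        lt_trans (NNReal.coe_lt_coe.2 htak) hk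
      have htcpt : IsCompact (closedBall x (t : ℝ)) :=
        hs0c _ (le_of_lt (htreal.trans_le (min_le_left _ _)))
      have ht2 : (t : ℝ) < dist y1 y2 / 2 := by
        have := htreal.trans_le (min_le_right _ _)
        linarith
      obtain ⟨Q, hxQ, hQc, hQconn, hQsub, hQd1, hQd2⟩ :=
        find_continuum' hy x (by exact_mod_cast htpos) ht2 htcpt
      have hQAdm : Adm δ' (glist (Y := Y) δ' (F k)) Q := by
        refine ⟨hQc, hQconn, ?_, ?_⟩
        · refine hQd2.trans ?_
          have h2t : (2 * (t : ℝ)) ≤ (r0 : ℝ) := by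
            have h1 : (t : ℝ) < (a k : ℝ) := NNReal.coe_lt_coe.2 htak
            have h2 : (a k : ℝ) ≤ (r0 : ℝ) / 2 := by
              have := NNReal.coe_le_coe.2 (ha_le k)
              rw [NNReal.coe_div] at this
              exact le_trans this (by norm_num)
            linarith
          calc ENNReal.ofReal (2 * (t : ℝ)) ≤ ENNReal.ofReal (r0 : ℝ) :=
                ENNReal.ofReal_le_ofReal h2t
            _ = (r0 : ℝ≥0∞) := ENNReal.ofReal_coe_nnreal
        · intro J hJ
          obtain ⟨j, hj, rfl⟩ := (mem_glist δ' (F k) J).1 hJ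
          have hkj : kf j ≤ k := hkf_min j k hj.le
          have hεrj : a k ≤ εr j := ha_anti hkj
          rw [Set.disjoint_left]
          intro z hzQ hzJ
          have h1 : EMetric.infEdist x (gstep δ' (glist (Y := Y) δ' j)) ≤ edist x z :=
            EMetric.infEdist_le_edist_of_mem hzJ
          have h2 : edist x z ≤ ((t : ℝ≥0) : ℝ≥0∞) := by
            rw [edist_dist, ← ENNReal.ofReal_coe_nnreal]
            refine ENNReal.ofReal_le_ofReal ?_
            have hz := hQsub hzQ
            rw [mem_closedBall] at hz
            rw [dist_comm]
            exact hz
          have h3 := hinf j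
          have h4 : ((εr j : ℝ≥0) : ℝ≥0∞) < ((t : ℝ≥0) : ℝ≥0∞) := lt_of_lt_of_le h3 (h1.trans h2)
          have h5 : εr j < t := ENNReal.coe_lt_coe.1 h4
          exact absurd (lt_of_le_of_lt hεrj h5) (not_lt.2 htak.le)
      have hcontr : EMetric.diam Q ≤ s (F k) := diam_le_Ssup hQAdm
      have hgt : s (F k) < EMetric.diam Q := by
        calc s (F k) = ((sA k : ℝ≥0) : ℝ≥0∞) := (hsAcoe k).symm
          _ < ((t : ℝ≥0) : ℝ≥0∞) :=
              ENNReal.coe_lt_coe.2 (lt_add_of_pos_right _ (half_pos (hbpos k)))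
          _ = ENNReal.ofReal (t : ℝ) := (ENNReal.ofReal_coe_nnreal).symm
          _ ≤ EMetric.diam Q := hQd1
      exact absurd hcontr (not_le.2 hgt)
    have hdiamCov : ∀ i, EMetric.diam (Cov i) ≤ δ := by
      intro i
      have h1 := Metric.ediam_cthickening_le (s := gstep δ' (glist (Y := Y) δ' i)) (εr i)
      have hKd : EMetric.diam (gstep δ' (glist (Y := Y) δ' i)) ≤ δ' := by
        have hmem : gstep δ' (glist δ' i) ∈ glist (Y := Y) δ' (i + 1) :=
          (mem_glist _ _ _).2 ⟨i, Nat.lt_succ_self i, rfl⟩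
        exact ((hGoodAll (i + 1)).1 _ hmem).2.2
      refine le_trans h1 ?_
      have h2 : (2 : ℝ≥0∞) * ((εr i : ℝ≥0) : ℝ≥0∞) ≤ ((r0 : ℝ≥0) : ℝ≥0∞) := by
        calc (2 : ℝ≥0∞) * ((εr i : ℝ≥0) : ℝ≥0∞)
            ≤ (2 : ℝ≥0∞) * ((r0 / 2 : ℝ≥0) : ℝ≥0∞) :=
              mul_le_mul_right (ENNReal.coe_le_coe.2 (hεr_le i)) 2
          _ = (((2 * (r0 / 2) : ℝ≥0)) : ℝ≥0∞) := by push_cast; ring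
          _ = ((r0 : ℝ≥0) : ℝ≥0∞) := by rw [mul_comm, div_mul_cancel₀ _ (two_ne_zero)]
      calc EMetric.diam (gstep δ' (glist (Y := Y) δ' i)) + 2 * ((εr i : ℝ≥0) : ℝ≥0∞)
          ≤ (r0 : ℝ≥0∞) + (r0 : ℝ≥0∞) := add_le_add hKd h2
        _ = ((2 * r0 : ℝ≥0) : ℝ≥0∞) := by push_cast; ring
        _ ≤ δ := h2r0
    have hblock : ∀ k, ((F k + 1 : ℕ) : ℝ≥0∞) * ((a k : ℝ≥0) : ℝ≥0∞)
        ≤ 2 * (((ε / (8 * 2 ^ k) : ℝ≥0)) : ℝ≥0∞) := by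
      intro k
      have hNN : ((F k : ℝ≥0) + 1) * a k ≤ 2 * (ε / (8 * 2 ^ k)) := by
        calc ((F k : ℝ≥0) + 1) * a k = ((F k : ℝ≥0) + 1) * sA k + ((F k : ℝ≥0) + 1) * b k := by
              rw [hadef]; ring
          _ ≤ ε / (8 * 2 ^ k) + ε / (8 * 2 ^ k) :=
              add_le_add ((hsAc k).trans (min_le_left _ _)) (hbc k)
          _ = 2 * (ε / (8 * 2 ^ k)) := (two_mul _).symm
      calc ((F k + 1 : ℕ) : ℝ≥0∞) * ((a k : ℝ≥0) : ℝ≥0∞)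
          = ((((F k : ℝ≥0) + 1) * a k : ℝ≥0) : ℝ≥0∞) := by push_cast; ring
        _ ≤ ((2 * (ε / (8 * 2 ^ k)) : ℝ≥0) : ℝ≥0∞) := ENNReal.coe_le_coe.2 hNN
        _ = 2 * (((ε / (8 * 2 ^ k) : ℝ≥0)) : ℝ≥0∞) := by push_cast; ring
    have hblocksum : ∀ k, ∑ i ∈ Finset.range (F k + 1), ((εr i : ℝ≥0) : ℝ≥0∞)
        ≤ ∑ j ∈ Finset.range (k + 1), 2 * (((ε / (8 * 2 ^ j) : ℝ≥0)) : ℝ≥0∞) := by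
      intro k
      induction k with
      | zero =>
        have hconst : ∀ i ∈ Finset.range (F 0 + 1),
            ((εr i : ℝ≥0) : ℝ≥0∞) = ((a 0 : ℝ≥0) : ℝ≥0∞) := by
          intro i hi
          have hi' : i ≤ F 0 := Nat.lt_succ_iff.1 (Finset.mem_range.1 hi)
          have hkf0 : kf i = 0 := Nat.le_zero.1 (hkf_min i 0 hi')
          rw [hεrdef]; simp only; rw [hkf0]
        rw [Finset.sum_congr rfl hconst, Finset.sum_const, Finset.card_range, nsmul_eq_mul,
          Finset.sum_range_one]
        exact hblock 0
      | succ k ih =>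
        have hsplit : ∑ i ∈ Finset.range (F (k+1) + 1), ((εr i : ℝ≥0) : ℝ≥0∞)
            = (∑ i ∈ Finset.range (F k + 1), ((εr i : ℝ≥0) : ℝ≥0∞))
              + ∑ i ∈ Finset.Ico (F k + 1) (F (k+1) + 1), ((εr i : ℝ≥0) : ℝ≥0∞) := by
          rw [Finset.range_eq_Ico, Finset.range_eq_Ico,
            Finset.sum_Ico_consecutive _ (Nat.zero_le _) (by have := hFlt k; omega)]
        have hconst : ∀ i ∈ Finset.Ico (F k + 1) (F (k+1) + 1),
            ((εr i : ℝ≥0) : ℝ≥0∞) = ((a (k+1) : ℝ≥0) : ℝ≥0∞) := by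
          intro i hi
          obtain ⟨hi1, hi2⟩ := Finset.mem_Ico.1 hi
          have hle : kf i ≤ k + 1 := hkf_min i (k+1) (Nat.lt_succ_iff.1 hi2)
          have hge : ¬ (kf i ≤ k) := by
            intro hc
            have : i ≤ F k := le_trans (hkf_spec i) (hFmono.monotone hc)
            omega
          have hkfi : kf i = k + 1 := by omega
          rw [hεrdef]; simp only; rw [hkfi]
        have hcard : ((Finset.Ico (F k + 1) (F (k+1) + 1)).card : ℝ≥0∞)
            ≤ ((F (k+1) + 1 : ℕ) : ℝ≥0∞) := by
          rw [Nat.card_Ico]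
          exact_mod_cast (by omega : F (k+1) + 1 - (F k + 1) ≤ F (k+1) + 1)
        have h2nd : ∑ i ∈ Finset.Ico (F k + 1) (F (k+1) + 1), ((εr i : ℝ≥0) : ℝ≥0∞)
            ≤ 2 * (((ε / (8 * 2 ^ (k+1)) : ℝ≥0)) : ℝ≥0∞) := by
          rw [Finset.sum_congr rfl hconst, Finset.sum_const, nsmul_eq_mul]
          exact le_trans (mul_le_mul_left hcard _) (hblock (k+1))
        rw [hsplit, Finset.sum_range_succ
          (fun j => 2 * (((ε / (8 * 2 ^ j) : ℝ≥0)) : ℝ≥0∞)) (k + 1)]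
        exact add_le_add ih h2nd
    have hεrtsum : ∑' i, ((εr i : ℝ≥0) : ℝ≥0∞) ≤ (ε : ℝ≥0∞) := by
      refine ENNReal.tsum_le_of_sum_range_le ?_
      intro n
      have h1 : Finset.range n ⊆ Finset.range (F n + 1) :=
        Finset.range_subset_range.2 (by have := hFge n; omega)
      refine le_trans (Finset.sum_le_sum_of_subset h1) ?_
      refine le_trans (hblocksum n) ?_
      have hcoe : ∑ j ∈ Finset.range (n + 1), 2 * (((ε / (8 * 2 ^ j) : ℝ≥0)) : ℝ≥0∞)
          = ((∑ j ∈ Finset.range (n + 1), 2 * (ε / (8 * 2 ^ j)) : ℝ≥0) : ℝ≥0∞) := by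
        push_cast; rfl
      rw [hcoe]
      refine ENNReal.coe_le_coe.2 ?_
      rw [← NNReal.coe_le_coe]
      push_cast
      have hsumgeo : ∑ j ∈ Finset.range (n + 1), 2 * ((ε : ℝ) / (8 * 2 ^ j))
          = ((ε : ℝ) / 4) * ∑ j ∈ Finset.range (n + 1), (1 / 2 : ℝ) ^ j := by
        rw [Finset.mul_sum]
        refine Finset.sum_congr rfl fun j _ => ?_
        rw [one_div, inv_pow]
        field_simp
        ring
      rw [hsumgeo]
      have hg := sum_geometric_two_le (n + 1)
      have hε4 : (0:ℝ) ≤ (ε : ℝ) / 4 := by positivity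
      nlinarith [mul_le_mul_of_nonneg_left hg hε4, NNReal.coe_nonneg ε]
    refine (Hdelta_le_cover Cov hcover hdiamCov).trans ?_
    have hper : ∀ i, EMetric.diam (Cov i) ≤ dK i + 2 * ((εr i : ℝ≥0) : ℝ≥0∞) := by
      intro i
      exact Metric.ediam_cthickening_le (εr i)
    calc ∑' i, EMetric.diam (Cov i) ≤ ∑' i, (dK i + 2 * ((εr i : ℝ≥0) : ℝ≥0∞)) :=
          ENNReal.tsum_le_tsum hper
      _ = (∑' i, dK i) + ∑' i, 2 * ((εr i : ℝ≥0) : ℝ≥0∞) := ENNReal.tsum_add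
      _ = (∑' i, dK i) + 2 * ∑' i, ((εr i : ℝ≥0) : ℝ≥0∞) := by rw [ENNReal.tsum_mul_left]
      _ ≤ L + 2 * (ε : ℝ≥0∞) := add_le_add htsumdK (mul_le_mul_right hεrtsum 2)


theorem stmt4 {X : Type*} [MetricSpace X] (E : Set X) (hE : IsConnected E)
    (hloc : LocallyCompactSpace E) (δ : ℝ≥0∞) (hδ : 0 < δ) :
    Hdelta δ E ≤ Ldelta E δ := by
  haveI : ConnectedSpace E := Subtype.connectedSpace hE
  haveI := hloc
  have h1 : Hdelta δ E ≤ Hdelta δ (univ : Set E) := by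
    refine le_iInf fun F => le_iInf fun hc => le_iInf fun hd => ?_
    have him : E ⊆ ⋃ n, (Subtype.val '' F n : Set X) := by
      intro x hx
      obtain ⟨n, hn⟩ := mem_iUnion.1 (hc (mem_univ (⟨x, hx⟩ : E)))
      exact mem_iUnion.2 ⟨n, ⟨⟨x, hx⟩, hn, rfl⟩⟩
    refine le_trans (Hdelta_le_cover _ him ?_) ?_
    · intro n
      exact (isometry_subtype_coe.ediam_image _).trans_le (hd n)
    · exact le_of_eq (tsum_congr fun n => isometry_subtype_coe.ediam_image _)
  have h2 : Ldelta (univ : Set E) δ ≤ Ldelta E δ := by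
    refine iSup_le fun n => iSup_le fun F => iSup_le fun h0 => iSup_le fun hcpt =>
      iSup_le fun hconn => iSup_le fun hdiam => iSup_le fun hdisj => ?_
    have hsum : ∑ i, EMetric.diam (F i)
        = ∑ i, EMetric.diam ((Subtype.val '' F i : Set X)) := by
      refine Finset.sum_congr rfl fun i _ => ?_
      exact (isometry_subtype_coe.ediam_image _).symm
    rw [hsum]
    refine sum_le_Ldelta n (fun i => (Subtype.val '' F i : Set X))
      (fun i => Subtype.coe_image_subset E (F i))
      (fun i => (hcpt i).image continuous_subtype_val)
      (fun i => (hconn i).image _ continuous_subtype_val.continuousOn)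
      (fun i => (isometry_subtype_coe.ediam_image _).trans_le (hdiam i))
      (fun i j hij => Set.disjoint_image_of_injective Subtype.val_injective (hdisj hij))
  exact h1.trans ((core δ hδ).trans h2)
end

section
/- Let F be a continuum in a metric space X, let {E_i} be a countable family of connected subsets of X, and let E' be the union of all E_i. Then H^1(F \ E') + Σ_i diam(E_i) ≥ diam(F). -/
open MeasureTheory ENNReal

theorem stmt6 {X : Type*} [MetricSpace X] [MeasurableSpace X] [BorelSpace X]
    (F : Set X) (hFc : IsCompact F) (hFconn : IsConnected F)
    (E : ℕ → Set X) (hE : ∀ i, IsPreconnected (E i)) :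
    EMetric.diam F ≤ μH[1] (F \ ⋃ i, E i) + ∑' i, EMetric.diam (E i) := by
  refine EMetric.diam_le fun x hx y hy => ?_
  set f : X → ℝ := fun z => dist x z with hf
  have hlip : LipschitzWith 1 f := LipschitzWith.dist_right x
  have hIcc : Set.Icc (0:ℝ) (dist x y) ⊆ f '' F := by
    have hconn : IsPreconnected (f '' F) :=
      hFconn.isPreconnected.image f hlip.continuous.continuousOn
    have h0 : (0:ℝ) ∈ f '' F := ⟨x, hx, by simp [hf]⟩
    have h1 : dist x y ∈ f '' F := ⟨y, hy, rfl⟩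
    exact hconn.ordConnected.out h0 h1
  have key : edist x y ≤ volume (f '' F) := by
    calc edist x y = volume (Set.Icc (0:ℝ) (dist x y)) := by
          rw [Real.volume_Icc, edist_dist]; simp
      _ ≤ volume (f '' F) := measure_mono hIcc
  have hsub : f '' F ⊆ f '' (F \ ⋃ i, E i) ∪ ⋃ i, f '' (E i) := by
    rintro _ ⟨z, hz, rfl⟩
    by_cases h : z ∈ ⋃ i, E i
    · right
      obtain ⟨i, hi⟩ := Set.mem_iUnion.1 h
      exact Set.mem_iUnion.2 ⟨i, ⟨z, hi, rfl⟩⟩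
    · left; exact ⟨z, ⟨hz, h⟩, rfl⟩
  calc edist x y ≤ volume (f '' F) := key
    _ ≤ volume (f '' (F \ ⋃ i, E i)) + ∑' i, volume (f '' (E i)) := by
        refine le_trans (measure_mono hsub) ?_
        exact le_trans (measure_union_le _ _)
          (add_le_add le_rfl (measure_iUnion_le _))
    _ ≤ μH[1] (F \ ⋃ i, E i) + ∑' i, EMetric.diam (E i) := by
        refine add_le_add ?_ (ENNReal.tsum_le_tsum fun i => ?_)
        · rw [← MeasureTheory.hausdorffMeasure_real]
          simpa using hlip.hausdorffMeasure_image_le zero_le_one (F \ ⋃ i, E i)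
        · exact (Real.volume_le_diam _).trans (by simpa [EMetric.diam] using hlip.ediam_image_le (E i))
end

section
/- Let K be a compact subset of a metric space X with at most m connected components, and suppose K contains a δ-connected subset K'. Then H^1(K) ≥ diam(K') − m·δ. -/
open MeasureTheory ENNReal NNReal

/-- H^1 of a preconnected set is at least the distance of any two of its points. -/
private lemma lemA {X : Type*} [MetricSpace X] [MeasurableSpace X] [BorelSpace X]
    {s : Set X} (hs : IsPreconnected s) {x y : X} (hx : x ∈ s) (hy : y ∈ s) :
    ENNReal.ofReal (dist x y) ≤ μH[1] s := by
  have hf : LipschitzWith 1 (dist x) := LipschitzWith.dist_right x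
  have himg : IsPreconnected (dist x '' s) := hs.image _ hf.continuous.continuousOn
  have h0 : (0 : ℝ) ∈ dist x '' s := ⟨x, hx, dist_self x⟩
  have hd : dist x y ∈ dist x '' s := ⟨y, hy, rfl⟩
  have hIcc : Set.Icc (0 : ℝ) (dist x y) ⊆ dist x '' s := himg.ordConnected.out h0 hd
  calc ENNReal.ofReal (dist x y) = volume (Set.Icc (0 : ℝ) (dist x y)) := by
        rw [Real.volume_Icc, sub_zero]
    _ ≤ volume (dist x '' s) := measure_mono hIcc
    _ = μH[1] (dist x '' s) := by rw [MeasureTheory.hausdorffMeasure_real]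
    _ ≤ (1 : ℝ≥0) ^ (1 : ℝ) * μH[1] s := hf.hausdorffMeasure_image_le zero_le_one s
    _ = μH[1] s := by simp

private lemma chain_bound {X : Type*} [MetricSpace X] {δ : ℝ} (hδ : 0 ≤ δ) :
    ∀ n : ℕ, ∀ (J : Finset (Set X)) (c : ℕ → X) (f : ℕ → Set X),
    (∀ C ∈ J, Bornology.IsBounded C) →
    (∀ i ≤ n, f i ∈ J ∧ c i ∈ f i) →
    (∀ i < n, dist (c i) (c (i + 1)) ≤ δ) →
    dist (c 0) (c n) ≤ (∑ C ∈ J, Metric.diam C) + J.card * δ := by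
  intro n
  induction n using Nat.strong_induction_on with
  | _ n IH =>
  intro J c f hb hf hd
  classical
  obtain ⟨hCJ, hc0⟩ := hf 0 (Nat.zero_le n)
  set C := f 0 with hC
  set i₀ := Nat.findGreatest (fun i => c i ∈ C) n with hi₀
  have hPi₀ : c i₀ ∈ C := Nat.findGreatest_spec (P := fun i => c i ∈ C) (Nat.zero_le n) hc0
  have hi₀n : i₀ ≤ n := Nat.findGreatest_le n
  have hgreat : ∀ i, i₀ < i → i ≤ n → c i ∉ C := fun i h1 h2 =>
    Nat.findGreatest_is_greatest (P := fun i => c i ∈ C) h1 h2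
  have hdiamle : Metric.diam C ≤ ∑ C' ∈ J, Metric.diam C' :=
    Finset.single_le_sum (f := fun C' => Metric.diam C') (fun _ _ => Metric.diam_nonneg) hCJ
  have hcard1 : 1 ≤ J.card := Finset.card_pos.mpr ⟨C, hCJ⟩
  have hhead : dist (c 0) (c i₀) ≤ Metric.diam C :=
    Metric.dist_le_diam_of_mem (hb C hCJ) hc0 hPi₀
  rcases eq_or_lt_of_le hi₀n with heq | hlt
  · have h1 : dist (c 0) (c n) ≤ Metric.diam C := heq ▸ hhead
    have h2 : 0 ≤ (J.card : ℝ) * δ := mul_nonneg (Nat.cast_nonneg _) hδ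
    linarith
  · set n' := n - i₀ - 1 with hn'
    have hn'lt : n' < n := by omega
    have hkey : i₀ + 1 + n' = n := by omega
    have htail : dist (c (i₀ + 1)) (c n) ≤
        (∑ C' ∈ J.erase C, Metric.diam C') + (J.erase C).card * δ := by
      have h := IH n' hn'lt (J.erase C) (fun j => c (i₀ + 1 + j)) (fun j => f (i₀ + 1 + j))
        (fun C' hC' => hb C' (Finset.mem_of_mem_erase hC'))
        (fun j hj => by
          obtain ⟨h1, h2⟩ := hf (i₀ + 1 + j) (by omega)
          refine ⟨Finset.mem_erase.mpr ⟨?_, h1⟩, h2⟩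
          intro hfeq
          exact hgreat (i₀ + 1 + j) (by omega) (by omega) (hfeq ▸ h2))
        (fun j hj => by
          have h := hd (i₀ + 1 + j) (by omega)
          show dist (c (i₀ + 1 + j)) (c (i₀ + 1 + (j + 1))) ≤ δ
          rw [show i₀ + 1 + (j + 1) = i₀ + 1 + j + 1 from by ring]
          exact h)
      simpa [hkey] using h
    have hmid : dist (c i₀) (c (i₀ + 1)) ≤ δ := hd i₀ hlt
    have hsplit : ∑ C' ∈ J, Metric.diam C' =
        Metric.diam C + ∑ C' ∈ J.erase C, Metric.diam C' :=
      (Finset.add_sum_erase J _ hCJ).symm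
    have hcard : ((J.erase C).card : ℝ) = (J.card : ℝ) - 1 := by
      rw [Finset.card_erase_of_mem hCJ, Nat.cast_sub hcard1, Nat.cast_one]
    have htri : dist (c 0) (c n) ≤
        dist (c 0) (c i₀) + dist (c i₀) (c (i₀ + 1)) + dist (c (i₀ + 1)) (c n) :=
      dist_triangle4 _ _ _ _
    rw [hcard] at htail
    linarith

/-- A set `A` is `δ`-connected if any two of its points are joined by a `δ`-chain in `A`. -/
def DeltaConnected {X : Type*} [MetricSpace X] (δ : ℝ) (A : Set X) : Prop :=
  ∀ x ∈ A, ∀ y ∈ A, ∃ (n : ℕ) (c : Fin (n + 1) → X),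
    (∀ i, c i ∈ A) ∧ c 0 = x ∧ c (Fin.last n) = y ∧
      ∀ i : Fin n, dist (c i.castSucc) (c i.succ) ≤ δ

theorem stmt8 {X : Type*} [MetricSpace X] [MeasurableSpace X] [BorelSpace X]
    (K : Set X) (hK : IsCompact K) (m : ℕ) (hm : 0 < m)
    (hcomp : ∃ I : Finset (Set X), I.card ≤ m ∧ ∀ x ∈ K, connectedComponentIn K x ∈ I)
    (δ : ℝ) (hδ : 0 < δ) (K' : Set X) (hK' : K' ⊆ K) (hchain : DeltaConnected δ K') :
    ENNReal.ofReal (Metric.diam K' - m * δ) ≤ μH[1] K := by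
  classical
  obtain ⟨I, hIcard, hI⟩ := hcomp
  haveI : CompactSpace ↥K := isCompact_iff_compactSpace.mp hK
  -- components of K are compact
  have hcomp_compact : ∀ z ∈ K, IsCompact (connectedComponentIn K z) := by
    intro z hz
    rw [connectedComponentIn_eq_image hz]
    exact (isClosed_connectedComponent.isCompact).image continuous_subtype_val
  have key : ∀ x ∈ K', ∀ y ∈ K',
      ENNReal.ofReal (dist x y - m * δ) ≤ μH[1] K := by
    intro x hx y hy
    obtain ⟨n, c, hcA, hc0, hclast, hcd⟩ := hchain x hx y hy
    set c' : ℕ → X := fun i => c ⟨min i n, by omega⟩ with hc'def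
    have hc'eq : ∀ i, i ≤ n → ∀ (h : i < n + 1), c' i = c ⟨i, h⟩ := by
      intro i hi h
      simp only [hc'def]
      congr 1
      exact Fin.ext (by simp [Nat.min_eq_left hi])
    set J : Finset (Set X) :=
      Finset.image (fun i : Fin (n + 1) => connectedComponentIn K (c i)) Finset.univ with hJdef
    have hJform : ∀ C ∈ J, ∃ z ∈ K, C = connectedComponentIn K z := by
      intro C hCm
      obtain ⟨i, _, hi⟩ := Finset.mem_image.mp hCm
      exact ⟨c i, hK' (hcA i), hi.symm⟩
    have hJI : J ⊆ I := by
      intro C hCm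
      obtain ⟨z, hz, rfl⟩ := hJform C hCm
      exact hI z hz
    have hJcard : J.card ≤ m := le_trans (Finset.card_le_card hJI) hIcard
    have hJbdd : ∀ C ∈ J, Bornology.IsBounded C := by
      intro C hCm
      obtain ⟨z, hz, rfl⟩ := hJform C hCm
      exact hK.isBounded.subset (connectedComponentIn_subset K z)
    -- chain bound
    have hchainb : dist (c' 0) (c' n) ≤ (∑ C ∈ J, Metric.diam C) + J.card * δ := by
      apply chain_bound hδ.le n J c' (fun i => connectedComponentIn K (c' i)) hJbdd
      · intro i hi
        constructor
        · rw [hc'eq i hi (by omega)]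
          exact Finset.mem_image.mpr ⟨⟨i, by omega⟩, Finset.mem_univ _, rfl⟩
        · exact mem_connectedComponentIn (hK' (hcA _))
      · intro i hi
        have h := hcd ⟨i, hi⟩
        rw [hc'eq i (by omega) (by omega), hc'eq (i + 1) (by omega) (by omega)]
        convert h using 2 <;> rfl
    have hx0 : c' 0 = x := by
      rw [hc'eq 0 (by omega) (by omega)]
      rw [show (⟨0, by omega⟩ : Fin (n + 1)) = 0 from Fin.ext (by simp)]
      exact hc0
    have hyn : c' n = y := by
      rw [hc'eq n (by omega) (by omega), ← hclast]; rfl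
    rw [hx0, hyn] at hchainb
    -- measure bound : sum of diameters ≤ μH[1] K
    have hdisj : (↑J : Set (Set X)).PairwiseDisjoint id := by
      intro C hCm D hDm hne
      obtain ⟨z, hz, rfl⟩ := hJform C hCm
      obtain ⟨w, hw, rfl⟩ := hJform D hDm
      simp only [Function.onFun, id_eq]
      rw [Set.disjoint_iff_inter_eq_empty]
      by_contra hcon
      obtain ⟨u, huC, huD⟩ := Set.nonempty_iff_ne_empty.mpr hcon
      exact hne ((connectedComponentIn_eq huC).trans (connectedComponentIn_eq huD).symm)
    have hmeas : ∀ C ∈ J, MeasurableSet C := by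
      intro C hCm
      obtain ⟨z, hz, rfl⟩ := hJform C hCm
      exact (hcomp_compact z hz).isClosed.measurableSet
    have hsum : μH[1] (⋃ C ∈ J, C) = ∑ C ∈ J, μH[1] C :=
      measure_biUnion_finset hdisj hmeas
    have hunion : (⋃ C ∈ J, C) ⊆ K := by
      intro u hu
      obtain ⟨C, hCm, huC⟩ := Set.mem_iUnion₂.mp hu
      obtain ⟨z, hz, rfl⟩ := hJform C hCm
      exact connectedComponentIn_subset K z huC
    have hdiam_le : ∀ C ∈ J, ENNReal.ofReal (Metric.diam C) ≤ μH[1] C := by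
      intro C hCm
      obtain ⟨z, hz, rfl⟩ := hJform C hCm
      have hpre : IsPreconnected (connectedComponentIn K z) := isPreconnected_connectedComponentIn
      rcases Set.eq_empty_or_nonempty (connectedComponentIn K z) with he | hne
      · simp [he, Metric.diam_empty]
      · have hb := hK.isBounded.subset (connectedComponentIn_subset K z)
        rw [Metric.diam]
        refine le_trans ENNReal.ofReal_toReal_le ?_
        refine EMetric.diam_le ?_
        intro a ha b hb'
        rw [edist_dist]
        exact lemA hpre ha hb'
    have hmeasure : ENNReal.ofReal (∑ C ∈ J, Metric.diam C) ≤ μH[1] K := by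
      calc ENNReal.ofReal (∑ C ∈ J, Metric.diam C)
          ≤ ∑ C ∈ J, ENNReal.ofReal (Metric.diam C) := (ENNReal.ofReal_sum_of_nonneg (fun _ _ => Metric.diam_nonneg)).le
        _ ≤ ∑ C ∈ J, μH[1] C := Finset.sum_le_sum hdiam_le
        _ = μH[1] (⋃ C ∈ J, C) := hsum.symm
        _ ≤ μH[1] K := measure_mono hunion
    refine le_trans (ENNReal.ofReal_le_ofReal ?_) hmeasure
    have : (J.card : ℝ) * δ ≤ (m : ℝ) * δ :=
      mul_le_mul_of_nonneg_right (Nat.cast_le.mpr hJcard) hδ.le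
    linarith
  -- conclude
  by_cases hfin : μH[1] K = ⊤
  · rw [hfin]; exact le_top
  · have hdiam : Metric.diam K' ≤ (μH[1] K).toReal + m * δ := by
      apply Metric.diam_le_of_forall_dist_le
      · positivity
      · intro x hx y hy
        have h := key x hx y hy
        have h2 : dist x y - m * δ ≤ (μH[1] K).toReal := by
          by_cases hpos : 0 ≤ dist x y - m * δ
          · have h3 := ENNReal.toReal_mono hfin h
            rwa [ENNReal.toReal_ofReal hpos] at h3
          · linarith [ENNReal.toReal_nonneg (a := μH[1] K)]
        linarith
    calc ENNReal.ofReal (Metric.diam K' - m * δ)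
        ≤ ENNReal.ofReal ((μH[1] K).toReal) := ENNReal.ofReal_le_ofReal (by linarith)
      _ = μH[1] K := ENNReal.ofReal_toReal hfin
end

section
/- Let K be a compact subset of a metric space X with at most m connected components, let K' be a δ-connected subset of K, and let U be a closed set containing K' with dist(K', ∂U) ≥ r for some r > 0. Then H^1(K ∩ U) ≥ (1 − δ/r)·diam(K') − m·δ. -/
open MeasureTheory ENNReal

open Set


/-- In a compact T2 space, a connected component disjoint from a closed set can be
separated from it by a clopen set. -/
lemma aux_clopen_sep {Y : Type*} [TopologicalSpace Y] [T2Space Y] [CompactSpace Y]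
    {F : Set Y} (hF : IsClosed F) (x : Y) (hd : Disjoint (connectedComponent x) F) :
    ∃ V : Set Y, IsClopen V ∧ connectedComponent x ⊆ V ∧ Disjoint V F := by
  have h : (F ∩ ⋂ (Z : {Z : Set Y // IsClopen Z ∧ x ∈ Z}), (Z : Set Y)) = ∅ := by
    rw [← connectedComponent_eq_iInter_isClopen]
    exact hd.symm.inter_eq
  obtain ⟨fin, hfin⟩ := hF.isCompact.elim_finite_subfamily_closed _
    (fun Z : {Z : Set Y // IsClopen Z ∧ x ∈ Z} => Z.2.1.1) h
  refine ⟨⋂ i ∈ fin, (i : Set Y), isClopen_biInter_finset fun i _ => i.2.1,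
    subset_iInter₂ fun i _ => i.2.1.connectedComponent_subset i.2.2, ?_⟩
  rw [disjoint_iff_inter_eq_empty, inter_comm]
  exact hfin

/-- Compactness of connected components in compact sets. -/
lemma aux_isCompact_ccIn {X : Type*} [MetricSpace X] {T : Set X} (hT : IsCompact T) (x : X) :
    IsCompact (connectedComponentIn T x) := by
  by_cases hx : x ∈ T
  · rw [connectedComponentIn_eq_image hx]
    haveI : CompactSpace T := isCompact_iff_compactSpace.mp hT
    exact (isClosed_connectedComponent.isCompact).image continuous_subtype_val
  · rw [connectedComponentIn_eq_empty hx]; exact isCompact_empty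

/-- Projection bound: Hausdorff measure of a compact connected set dominates the length of
its image under the distance to a point. -/
lemma aux_proj_bound {X : Type*} [MetricSpace X] [MeasurableSpace X] [BorelSpace X]
    {A : Set X} (hA : IsCompact A) (hne : A.Nonempty) (hc : IsPreconnected A) (p : X) :
    ENNReal.ofReal (sSup (dist p '' A) - sInf (dist p '' A)) ≤ μH[1] A := by
  set g : X → ℝ := dist p with hg
  have hlip : LipschitzWith 1 g := LipschitzWith.dist_right p
  have hBc : IsCompact (g '' A) := hA.image hlip.continuous
  have hBconn : IsConnected (g '' A) := ⟨hne.image g, hc.image g hlip.continuous.continuousOn⟩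
  have hIcc : g '' A = Set.Icc (sInf (g '' A)) (sSup (g '' A)) :=
    eq_Icc_of_connected_compact hBconn hBc
  have h1 : μH[1] (g '' A) ≤ μH[1] A := by
    simpa using hlip.hausdorffMeasure_image_le (by norm_num : (0:ℝ) ≤ 1) A
  calc ENNReal.ofReal (sSup (g '' A) - sInf (g '' A))
      = volume (Set.Icc (sInf (g '' A)) (sSup (g '' A))) := by rw [Real.volume_Icc]
    _ = μH[1] (g '' A) := by rw [← hIcc, hausdorffMeasure_real]
    _ ≤ μH[1] A := h1

lemma aux_dist_le_meas {X : Type*} [MetricSpace X] [MeasurableSpace X] [BorelSpace X]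
    {A : Set X} (hA : IsCompact A) (hc : IsPreconnected A) {p q : X} (hp : p ∈ A) (hq : q ∈ A) :
    ENNReal.ofReal (dist p q) ≤ μH[1] A := by
  refine le_trans ?_ (aux_proj_bound hA ⟨p, hp⟩ hc p)
  apply ENNReal.ofReal_le_ofReal
  have hbdd : BddAbove (dist p '' A) := (hA.image (LipschitzWith.dist_right p).continuous).bddAbove
  have h1 : dist p q ≤ sSup (dist p '' A) := le_csSup hbdd ⟨q, hq, rfl⟩
  have h2 : sInf (dist p '' A) ≤ 0 := by
    have := csInf_le (hA.image (LipschitzWith.dist_right p).continuous).bddBelow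
      (⟨p, hp, dist_self p⟩ : (0:ℝ) ∈ dist p '' A)
    simpa using this
  linarith

lemma aux_dichotomy {X : Type*} [MetricSpace X] {K U : Set X} (hK : IsCompact K)
    (hU : IsClosed U) {t : X} (ht : t ∈ K ∩ U) :
    connectedComponentIn (K ∩ U) t = connectedComponentIn K t ∨
      ∃ q ∈ connectedComponentIn (K ∩ U) t, q ∈ frontier U := by
  set T := K ∩ U with hTdef
  have hT : IsCompact T := hK.inter_right hU
  set Q := connectedComponentIn T t with hQdef
  by_cases hQF : ∃ q ∈ Q, q ∈ frontier U
  · exact Or.inr hQF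
  push_neg at hQF
  left
  haveI : CompactSpace T := isCompact_iff_compactSpace.mp hT
  set t' : T := ⟨t, ht⟩ with ht'
  have hQim : Q = Subtype.val '' connectedComponent t' := connectedComponentIn_eq_image ht
  have hF'closed : IsClosed (Subtype.val ⁻¹' frontier U : Set T) :=
    isClosed_frontier.preimage continuous_subtype_val
  have hd : Disjoint (connectedComponent t') (Subtype.val ⁻¹' frontier U : Set T) := by
    rw [Set.disjoint_left]
    intro z hz hzF
    exact hQF z.1 (hQim ▸ ⟨z, hz, rfl⟩) hzF
  obtain ⟨V', hV'clopen, hsub, hdisj⟩ := aux_clopen_sep hF'closed t' hd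
  set V : Set X := Subtype.val '' V' with hVdef
  have hVT : V ⊆ T := Subtype.coe_image_subset T V'
  have hVclosed : IsClosed V :=
    ((hV'clopen.isClosed.isCompact).image continuous_subtype_val).isClosed
  obtain ⟨O, hO, hOV⟩ := isOpen_induced_iff.mp hV'clopen.isOpen
  have hVfr : ∀ v ∈ V, v ∉ frontier U := by
    rintro v ⟨w, hw, rfl⟩ hvf
    exact Set.disjoint_left.mp hdisj hw hvf
  have hVint : V ⊆ interior U := by
    intro v hv
    have hvU : v ∈ U := (hVT hv).2
    have := hVfr v hv
    rw [hU.frontier_eq] at this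
    by_contra hvi
    exact this ⟨hvU, hvi⟩
  have hVeq : V = O ∩ T := by
    rw [hVdef, ← hOV, Subtype.image_preimage_coe, Set.inter_comm]
  have hVopenK : V = (O ∩ interior U) ∩ K := by
    apply Set.Subset.antisymm
    · intro v hv
      exact ⟨⟨(hVeq ▸ hv).1, hVint hv⟩, (hVT hv).1⟩
    · rintro v ⟨⟨hvO, hvi⟩, hvK⟩
      rw [hVeq]
      exact ⟨hvO, hvK, interior_subset hvi⟩
  -- now V is clopen in K
  have htV : t ∈ V := by
    have : t ∈ Q := mem_connectedComponentIn ht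
    rw [hQim] at this
    obtain ⟨w, hw, rfl⟩ := this
    exact ⟨w, hsub hw, rfl⟩
  set VK : Set K := Subtype.val ⁻¹' V with hVKdef
  have hVKclopen : IsClopen VK := by
    constructor
    · exact hVclosed.preimage continuous_subtype_val
    · refine isOpen_induced_iff.mpr ⟨O ∩ interior U, hO.inter isOpen_interior, ?_⟩
      ext z
      simp only [Set.mem_preimage, hVKdef]
      constructor
      · intro hz
        rw [hVopenK]; exact ⟨hz, z.2⟩
      · intro hz
        rw [hVopenK] at hz; exact hz.1
  have hccK : connectedComponent (⟨t, ht.1⟩ : K) ⊆ VK :=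
    hVKclopen.connectedComponent_subset htV
  have hCsub : connectedComponentIn K t ⊆ T := by
    rw [connectedComponentIn_eq_image ht.1]
    rintro v ⟨w, hw, rfl⟩
    exact hVT (hccK hw)
  apply Set.Subset.antisymm
  · exact isPreconnected_connectedComponentIn.subset_connectedComponentIn
      (mem_connectedComponentIn ht) ((connectedComponentIn_subset T t).trans Set.inter_subset_left)
  · exact isPreconnected_connectedComponentIn.subset_connectedComponentIn
      (mem_connectedComponentIn ht.1) hCsub

lemma aux_key {X : Type*} [MetricSpace X] [MeasurableSpace X] [BorelSpace X]
    (K : Set X) (hK : IsCompact K) (m : ℕ)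
    (I : Finset (Set X)) (hIcard : I.card ≤ m) (hI : ∀ x ∈ K, connectedComponentIn K x ∈ I)
    (δ : ℝ) (hδ : 0 < δ) (K' : Set X) (hK' : K' ⊆ K)
    (U : Set X) (hU : IsClosed U) (hK'U : K' ⊆ U) (r : ℝ) (hr : 0 < r) (hδr : δ < r)
    (hdist : ∀ x ∈ K', ∀ y ∈ frontier U, r ≤ dist x y)
    (hμ : μH[1] (K ∩ U) ≠ ⊤)
    {x y : X} (hx : x ∈ K') (hy : y ∈ K')
    (n : ℕ) (c : Fin (n+1) → X) (hcmem : ∀ i, c i ∈ K') (hc0 : c 0 = x)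
    (hclast : c (Fin.last n) = y) (hstep : ∀ i : Fin n, dist (c i.castSucc) (c i.succ) ≤ δ) :
    (1 - δ / r) * dist x y - m * δ ≤ (μH[1] (K ∩ U)).toReal := by
  classical
  have hk0 : 0 ≤ 1 - δ / r := by
    have := (div_le_one hr).mpr hδr.le; linarith
  have hk1 : 1 - δ / r ≤ 1 := by
    have : 0 ≤ δ / r := div_nonneg hδ.le hr.le; linarith
  set T := K ∩ U with hTdef
  have hT : IsCompact T := hK.inter_right hU
  have hcT : ∀ i, c i ∈ T := fun i => ⟨hK' (hcmem i), hK'U (hcmem i)⟩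
  set Q : Fin (n+1) → Set X := fun i => connectedComponentIn T (c i) with hQdef
  have hQc : ∀ i, IsCompact (Q i) := fun i => aux_isCompact_ccIn hT (c i)
  have hQconn : ∀ i, IsPreconnected (Q i) := fun i => isPreconnected_connectedComponentIn
  have hQmem : ∀ i, c i ∈ Q i := fun i => mem_connectedComponentIn (hcT i)
  have hQsub : ∀ i, Q i ⊆ T := fun i => connectedComponentIn_subset T (c i)
  set S : Finset (Set X) := Finset.image Q Finset.univ with hSdef
  set ℓ : Set X → ℝ := fun A => sSup (dist x '' A) - sInf (dist x '' A) with hldef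
  set hgt : Set X → ℝ := fun A => (μH[1] A).toReal with hgtdef
  have hmemS : ∀ A ∈ S, ∃ i, Q i = A := by
    intro A hA
    obtain ⟨i, _, hi⟩ := Finset.mem_image.mp hA
    exact ⟨i, hi⟩
  have hμA_fin : ∀ A ∈ S, μH[1] A ≠ ⊤ := by
    intro A hA
    obtain ⟨i, rfl⟩ := hmemS A hA
    exact ((measure_mono (hQsub i)).trans_lt (lt_top_iff_ne_top.mpr hμ)).ne
  have hl_nonneg : ∀ A ∈ S, 0 ≤ ℓ A := by
    intro A hA
    obtain ⟨i, rfl⟩ := hmemS A hA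
    have hbc : IsCompact (dist x '' Q i) :=
      (hQc i).image (LipschitzWith.dist_right x).continuous
    have h1 : sInf (dist x '' Q i) ≤ dist x (c i) :=
      csInf_le hbc.bddBelow ⟨c i, hQmem i, rfl⟩
    have h2 : dist x (c i) ≤ sSup (dist x '' Q i) :=
      le_csSup hbc.bddAbove ⟨c i, hQmem i, rfl⟩
    simp only [hldef]; linarith
  have hlh : ∀ A ∈ S, ℓ A ≤ hgt A := by
    intro A hA
    obtain ⟨i, rfl⟩ := hmemS A hA
    have := aux_proj_bound (hQc i) ⟨c i, hQmem i⟩ (hQconn i) x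
    exact (ENNReal.ofReal_le_iff_le_toReal (hμA_fin _ hA)).mp this
  have hrh : ∀ A ∈ S, A ∉ I → r ≤ hgt A := by
    intro A hA hAI
    obtain ⟨i, rfl⟩ := hmemS A hA
    rcases aux_dichotomy hK hU (hcT i) with heq | ⟨q, hqQ, hqfr⟩
    · have h4 : Q i = connectedComponentIn K (c i) := heq
      have h5 : Q i ∈ I := by rw [h4]; exact hI _ (hK' (hcmem i))
      exact absurd h5 hAI
    · have h1 : r ≤ dist (c i) q := hdist (c i) (hcmem i) q hqfr
      have h2 := aux_dist_le_meas (hQc i) (hQconn i) (hQmem i) hqQ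
      have h3 := (ENNReal.ofReal_le_iff_le_toReal (hμA_fin _ hA)).mp h2
      exact h1.trans h3
  have hpair : (S : Set (Set X)).PairwiseDisjoint id := by
    intro A hA B hB hAB
    obtain ⟨i, rfl⟩ := hmemS A hA
    obtain ⟨j, rfl⟩ := hmemS B hB
    refine Set.disjoint_left.mpr fun z hzA hzB => hAB ?_
    simp only [id_eq] at hzA hzB
    show connectedComponentIn T (c i) = connectedComponentIn T (c j)
    rw [connectedComponentIn_eq hzA, connectedComponentIn_eq hzB]
  have hsum1 : ∑ A ∈ S, μH[1] A ≤ μH[1] T := by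
    have hmeas : ∀ A ∈ S, MeasurableSet A := by
      intro A hA
      obtain ⟨i, rfl⟩ := hmemS A hA
      exact (hQc i).isClosed.measurableSet
    have heqm := measure_biUnion_finset (μ := μH[1]) hpair hmeas
    simp only [id_eq] at heqm
    rw [← heqm]
    exact measure_mono (Set.iUnion₂_subset fun A hA => by
      obtain ⟨i, rfl⟩ := hmemS A hA; exact hQsub i)
  have hH : ∑ A ∈ S, hgt A ≤ (μH[1] T).toReal := by
    have := ENNReal.toReal_mono hμ hsum1
    rwa [ENNReal.toReal_sum hμA_fin] at this
  -- covering argument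
  have hcov : Set.Icc 0 (dist x y) ⊆
      ⋃ A ∈ S, Set.Icc (sInf (dist x '' A) - δ) (sSup (dist x '' A)) := by
    rintro tt ⟨htt0, htty⟩
    set P : Finset (Fin (n+1)) := Finset.univ.filter (fun i => tt ≤ dist x (c i)) with hP
    have hPne : P.Nonempty :=
      ⟨Fin.last n, Finset.mem_filter.mpr ⟨Finset.mem_univ _, by rw [hclast]; exact htty⟩⟩
    set i₀ := P.min' hPne with hi₀def
    have hi₀P : i₀ ∈ P := P.min'_mem hPne
    have hi₀ : tt ≤ dist x (c i₀) := (Finset.mem_filter.mp hi₀P).2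
    have hub : dist x (c i₀) ≤ tt + δ := by
      rcases eq_or_ne i₀ 0 with h0 | h0
      · rw [h0, hc0, dist_self]; linarith
      · obtain ⟨j, hj⟩ := Fin.eq_succ_of_ne_zero h0
        have hjlt : (j.castSucc : Fin (n+1)) < i₀ := hj ▸ Fin.castSucc_lt_succ (i := j)
        have hjnot : j.castSucc ∉ P := fun hmem => absurd (P.min'_le _ hmem) (not_le.mpr hjlt)
        have hjlt' : ¬ tt ≤ dist x (c j.castSucc) :=
          fun h => hjnot (Finset.mem_filter.mpr ⟨Finset.mem_univ _, h⟩)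
        push_neg at hjlt'
        have htri : dist x (c i₀) ≤ dist x (c j.castSucc) + δ := by
          rw [hj]
          calc dist x (c j.succ) ≤ dist x (c j.castSucc) + dist (c j.castSucc) (c j.succ) :=
                dist_triangle _ _ _
            _ ≤ dist x (c j.castSucc) + δ := by linarith [hstep j]
        linarith
    have hbc : IsCompact (dist x '' Q i₀) :=
      (hQc i₀).image (LipschitzWith.dist_right x).continuous
    refine Set.mem_biUnion (Finset.mem_image.mpr ⟨i₀, Finset.mem_univ _, rfl⟩) ?_
    constructor
    · have h1 : sInf (dist x '' Q i₀) ≤ dist x (c i₀) :=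
        csInf_le hbc.bddBelow ⟨c i₀, hQmem i₀, rfl⟩
      linarith
    · have h2 : dist x (c i₀) ≤ sSup (dist x '' Q i₀) :=
        le_csSup hbc.bddAbove ⟨c i₀, hQmem i₀, rfl⟩
      linarith
  have hd_le : dist x y ≤ ∑ A ∈ S, (ℓ A + δ) := by
    have hcovm : ENNReal.ofReal (dist x y) ≤ ∑ A ∈ S, ENNReal.ofReal (ℓ A + δ) := by
      calc ENNReal.ofReal (dist x y) = volume (Set.Icc (0:ℝ) (dist x y)) := by
            rw [Real.volume_Icc, sub_zero]
        _ ≤ volume (⋃ A ∈ S, Set.Icc (sInf (dist x '' A) - δ) (sSup (dist x '' A))) :=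
            measure_mono hcov
        _ ≤ ∑ A ∈ S, volume (Set.Icc (sInf (dist x '' A) - δ) (sSup (dist x '' A))) :=
            measure_biUnion_finset_le S _
        _ = ∑ A ∈ S, ENNReal.ofReal (ℓ A + δ) := by
            refine Finset.sum_congr rfl fun A _ => ?_
            rw [Real.volume_Icc]
            congr 1
            simp only [hldef]; ring
    rw [← ENNReal.ofReal_sum_of_nonneg (fun A hA => by linarith [hl_nonneg A hA])] at hcovm
    exact (ENNReal.ofReal_le_ofReal_iff
      (Finset.sum_nonneg fun A hA => by linarith [hl_nonneg A hA])).mp hcovm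
  -- final arithmetic
  set Sf := S.filter (· ∈ I) with hSf
  set St := S.filter (fun A => A ∉ I) with hSt
  have ha : (Sf.card : ℝ) ≤ m := by
    have h1 : Sf.card ≤ I.card :=
      Finset.card_le_card (fun A hA => (Finset.mem_filter.mp hA).2)
    exact_mod_cast h1.trans hIcard
  have hcards : Sf.card + St.card = S.card := Finset.card_filter_add_card_filter_not _
  have hboundf : ∀ A ∈ Sf, (1 - δ / r) * ℓ A ≤ hgt A := by
    intro A hA
    have hAS : A ∈ S := (Finset.mem_filter.mp hA).1
    calc (1 - δ / r) * ℓ A ≤ ℓ A := mul_le_of_le_one_left (hl_nonneg A hAS) hk1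
      _ ≤ hgt A := hlh A hAS
  have hboundt : ∀ A ∈ St, (1 - δ / r) * ℓ A + δ ≤ hgt A := by
    intro A hA
    have hAS : A ∈ S := (Finset.mem_filter.mp hA).1
    have h1 := hlh A hAS
    have h2 := hrh A hAS (Finset.mem_filter.mp hA).2
    have h3 := hl_nonneg A hAS
    have hkr : (δ / r) * r = δ := div_mul_cancel₀ δ hr.ne'
    nlinarith [mul_nonneg hk0 (sub_nonneg.mpr h1),
      mul_nonneg (div_nonneg hδ.le hr.le) (sub_nonneg.mpr h2)]
  have hsplitH : ∑ A ∈ Sf, hgt A + ∑ A ∈ St, hgt A = ∑ A ∈ S, hgt A :=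
    Finset.sum_filter_add_sum_filter_not S _ _
  have hsplitL : ∑ A ∈ Sf, ℓ A + ∑ A ∈ St, ℓ A = ∑ A ∈ S, ℓ A :=
    Finset.sum_filter_add_sum_filter_not S _ _
  have hmain : (1 - δ / r) * (∑ A ∈ Sf, ℓ A) + ((1 - δ / r) * (∑ A ∈ St, ℓ A)
      + (St.card : ℝ) * δ) ≤ (μH[1] T).toReal := by
    have h1 : ∑ A ∈ Sf, (1 - δ / r) * ℓ A ≤ ∑ A ∈ Sf, hgt A := Finset.sum_le_sum hboundf
    have h2 : ∑ A ∈ St, ((1 - δ / r) * ℓ A + δ) ≤ ∑ A ∈ St, hgt A := Finset.sum_le_sum hboundt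
    rw [Finset.sum_add_distrib, Finset.sum_const, nsmul_eq_mul] at h2
    rw [← Finset.mul_sum] at h1 h2
    linarith
  have hLsum : ∑ A ∈ S, (ℓ A + δ) = ∑ A ∈ S, ℓ A + (S.card : ℝ) * δ := by
    rw [Finset.sum_add_distrib, Finset.sum_const, nsmul_eq_mul]
  rw [hLsum] at hd_le
  -- combine
  have hmul : (1 - δ / r) * (dist x y - (S.card : ℝ) * δ) ≤ (1 - δ / r) * (∑ A ∈ S, ℓ A) :=
    mul_le_mul_of_nonneg_left (by linarith) hk0
  have hNc : (S.card : ℝ) = (Sf.card : ℝ) + (St.card : ℝ) := by exact_mod_cast hcards.symm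
  have hkN : (1 - δ / r) * ((S.card : ℝ) * δ) ≤ (S.card : ℝ) * δ :=
    mul_le_of_le_one_left (by positivity) hk1
  have haδ : (Sf.card : ℝ) * δ ≤ (m : ℝ) * δ := mul_le_mul_of_nonneg_right ha hδ.le
  nlinarith [hmain, hmul, hsplitL, hd_le, hkN, haδ, hNc,
    mul_le_of_le_one_left (mul_nonneg (Nat.cast_nonneg St.card) hδ.le) hk1]

theorem stmt9 {X : Type*} [MetricSpace X] [MeasurableSpace X] [BorelSpace X]
    (K : Set X) (hK : IsCompact K) (m : ℕ) (hm : 0 < m)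
    (hcomp : ∃ I : Finset (Set X), I.card ≤ m ∧ ∀ x ∈ K, connectedComponentIn K x ∈ I)
    (δ : ℝ) (hδ : 0 < δ) (K' : Set X) (hK' : K' ⊆ K) (hchain : DeltaConnected δ K')
    (U : Set X) (hU : IsClosed U) (hK'U : K' ⊆ U) (r : ℝ) (hr : 0 < r)
    (hdist : ∀ x ∈ K', ∀ y ∈ frontier U, r ≤ dist x y) :
    ENNReal.ofReal ((1 - δ / r) * Metric.diam K' - m * δ) ≤ μH[1] (K ∩ U) := by
  classical
  obtain ⟨I, hIcard, hI⟩ := hcomp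
  by_cases hrδ : r ≤ δ
  · have hle : (1 - δ / r) * Metric.diam K' - m * δ ≤ 0 := by
      have h1 : 1 ≤ δ / r := (one_le_div hr).mpr hrδ
      have h2 : 0 ≤ Metric.diam K' := Metric.diam_nonneg
      nlinarith [mul_nonneg (sub_nonneg.mpr h1) h2, mul_nonneg (Nat.cast_nonneg m) hδ.le]
    rw [ENNReal.ofReal_eq_zero.mpr hle]
    exact zero_le
  push_neg at hrδ
  by_cases hμtop : μH[1] (K ∩ U) = ⊤
  · rw [hμtop]; exact le_top
  have hk0 : 0 < 1 - δ / r := by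
    have := (div_lt_one hr).mpr hrδ; linarith
  have key : ∀ x ∈ K', ∀ y ∈ K',
      (1 - δ / r) * dist x y - m * δ ≤ (μH[1] (K ∩ U)).toReal := by
    intro x hx y hy
    obtain ⟨n, c, hcmem, hc0, hclast, hstep⟩ := hchain x hx y hy
    exact aux_key K hK m I hIcard hI δ hδ K' hK' U hU hK'U r hr hrδ hdist hμtop hx hy
      n c hcmem hc0 hclast hstep
  set M := (μH[1] (K ∩ U)).toReal with hM
  have hM0 : 0 ≤ M := ENNReal.toReal_nonneg
  have hdiam : Metric.diam K' ≤ (M + m * δ) / (1 - δ / r) := by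
    refine Metric.diam_le_of_forall_dist_le (by positivity) ?_
    intro x hx y hy
    rw [le_div_iff₀ hk0]
    nlinarith [key x hx y hy]
  have hfinal : (1 - δ / r) * Metric.diam K' - m * δ ≤ M := by
    have h2 := mul_le_mul_of_nonneg_left hdiam hk0.le
    rw [mul_comm (1 - δ / r) ((M + m * δ) / (1 - δ / r)), div_mul_cancel₀ _ hk0.ne'] at h2
    linarith
  calc ENNReal.ofReal ((1 - δ / r) * Metric.diam K' - m * δ)
      ≤ ENNReal.ofReal M := ENNReal.ofReal_le_ofReal hfinal
    _ = μH[1] (K ∩ U) := ENNReal.ofReal_toReal hμtop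
end

section
/- Let X be a metric space which is a continuum with H^1(X) < +∞, and let x ≠ x' be points of X. Then for every δ > 0 there exists a δ-chain in X connecting x and x' whose length Σ d(x_{i-1},x_i) is at most 4·H^1(X). -/
open MeasureTheory ENNReal

theorem chain_exists' {X : Type*} [MetricSpace X] [ConnectedSpace X]
    (x x' : X) (δ : ℝ) (hδ : 0 < δ) :
    ∃ (n : ℕ) (c : Fin (n + 1) → X), c 0 = x ∧ c (Fin.last n) = x' ∧
      ∀ i : Fin n, dist (c i.castSucc) (c i.succ) ≤ δ := by
  set S : Set X := {y | ∃ (n : ℕ) (c : Fin (n + 1) → X), c 0 = x ∧ c (Fin.last n) = y ∧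
      ∀ i : Fin n, dist (c i.castSucc) (c i.succ) ≤ δ} with hS
  have hext : ∀ y z : X, y ∈ S → dist y z ≤ δ → z ∈ S := by
    rintro y z ⟨n, c, h0, hl, hd⟩ hyz
    refine ⟨n + 1, Fin.snoc c z, ?_, ?_, ?_⟩
    · rw [show (0 : Fin (n+2)) = Fin.castSucc 0 by rfl, Fin.snoc_castSucc, h0]
    · simp
    · intro i
      refine Fin.lastCases ?_ ?_ i
      · rw [Fin.succ_last, Fin.snoc_last, Fin.snoc_castSucc, hl]
        exact hyz
      · intro j
        rw [Fin.succ_castSucc, Fin.snoc_castSucc, Fin.snoc_castSucc]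
        exact hd j
  have hx : x ∈ S := ⟨0, fun _ => x, rfl, rfl, fun i => i.elim0⟩
  have hopen : IsOpen S := by
    rw [Metric.isOpen_iff]
    intro y hy
    exact ⟨δ, hδ, fun z hz => hext y z hy (le_of_lt (by rwa [Metric.mem_ball, dist_comm] at hz))⟩
  have hclosed : IsClosed S := by
    rw [← isOpen_compl_iff, Metric.isOpen_iff]
    intro y hy
    refine ⟨δ, hδ, fun z hz hzS => hy ?_⟩
    exact hext z y hzS (le_of_lt (by rwa [Metric.mem_ball] at hz))
  have : S = Set.univ := IsClopen.eq_univ ⟨hclosed, hopen⟩ ⟨x, hx⟩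
  have := this ▸ Set.mem_univ x'
  exact this

theorem measure_ge_of_dist' {X : Type*} [MetricSpace X] [MeasurableSpace X] [BorelSpace X]
    [ConnectedSpace X] (p y : X) :
    ENNReal.ofReal (dist p y) ≤ μH[1] (Set.univ : Set X) := by
  have hlip : LipschitzWith 1 (dist p) := LipschitzWith.dist_right p
  have hconn : IsPreconnected ((dist p) '' (Set.univ : Set X)) :=
    isPreconnected_univ.image _ (hlip.continuous.continuousOn)
  have hsub : Set.Icc (0:ℝ) (dist p y) ⊆ (dist p) '' Set.univ :=
    hconn.Icc_subset ⟨p, trivial, dist_self p⟩ ⟨y, trivial, rfl⟩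
  calc ENNReal.ofReal (dist p y) = μH[1] (Set.Icc (0:ℝ) (dist p y)) := by
        rw [hausdorffMeasure_real, Real.volume_Icc, sub_zero]
    _ ≤ μH[1] ((dist p) '' Set.univ) := measure_mono hsub
    _ ≤ μH[1] (Set.univ : Set X) := by
        simpa using hlip.hausdorffMeasure_image_le zero_le_one (Set.univ : Set X)

theorem measure_ball_ge' {X : Type*} [MetricSpace X] [MeasurableSpace X] [BorelSpace X]
    [ConnectedSpace X] (p y : X) (r : ℝ) (hy : r ≤ dist p y) :
    ENNReal.ofReal r ≤ μH[1] (Metric.ball p r) := by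
  have hlip : LipschitzWith 1 (dist p) := LipschitzWith.dist_right p
  have hconn : IsPreconnected ((dist p) '' (Set.univ : Set X)) :=
    isPreconnected_univ.image _ (hlip.continuous.continuousOn)
  have hsub : Set.Icc (0:ℝ) (dist p y) ⊆ (dist p) '' Set.univ :=
    hconn.Icc_subset ⟨p, trivial, dist_self p⟩ ⟨y, trivial, rfl⟩
  have himg : Set.Ico (0:ℝ) r ⊆ (dist p) '' (Metric.ball p r) := by
    intro t ht
    obtain ⟨z, -, hz⟩ := hsub ⟨ht.1, ht.2.le.trans hy⟩
    exact ⟨z, by rw [Metric.mem_ball, dist_comm, hz]; exact ht.2, hz⟩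
  calc ENNReal.ofReal r = μH[1] (Set.Ico (0:ℝ) r) := by
        rw [hausdorffMeasure_real, Real.volume_Ico, sub_zero]
    _ ≤ μH[1] ((dist p) '' (Metric.ball p r)) := measure_mono himg
    _ ≤ μH[1] (Metric.ball p r) := by
        simpa using hlip.hausdorffMeasure_image_le zero_le_one (Metric.ball p r)

theorem stmt11 {X : Type*} [MetricSpace X] [MeasurableSpace X] [BorelSpace X]
    [CompactSpace X] [ConnectedSpace X]
    (hfin : μH[1] (Set.univ : Set X) < ⊤)
    (x x' : X) (hxx : x ≠ x') (δ : ℝ) (hδ : 0 < δ) :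
    ∃ (n : ℕ) (c : Fin (n + 1) → X), c 0 = x ∧ c (Fin.last n) = x' ∧
      (∀ i : Fin n, dist (c i.castSucc) (c i.succ) ≤ δ) ∧
      ENNReal.ofReal (∑ i : Fin n, dist (c i.castSucc) (c i.succ)) ≤
        4 * μH[1] (Set.univ : Set X) := by
  classical
  have hP : ∃ n : ℕ, ∃ c : Fin (n + 1) → X, c 0 = x ∧ c (Fin.last n) = x' ∧
      ∀ i : Fin n, dist (c i.castSucc) (c i.succ) ≤ δ := chain_exists' x x' δ hδ
  set n := Nat.find hP with hn
  obtain ⟨c, h0, hl, hd⟩ : ∃ c : Fin (n + 1) → X, c 0 = x ∧ c (Fin.last n) = x' ∧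
      ∀ i : Fin n, dist (c i.castSucc) (c i.succ) ≤ δ := Nat.find_spec hP
  clear_value n
  have hcc : ∀ (a : ℕ) (ha : a < n + 1) (b : Fin (n + 1)), a = (b : ℕ) → c ⟨a, ha⟩ = c b := by
    rintro a ha b h
    congr 1
    exact Fin.ext h
  -- minimality: no shortcuts
  have hsep : ∀ i j : Fin (n + 1), (i : ℕ) + 2 ≤ (j : ℕ) → δ < dist (c i) (c j) := by
    intro i j hij
    by_contra hcon
    push_neg at hcon
    have hj2 := j.2
    set k : ℕ := (j : ℕ) - (i : ℕ) - 1 with hk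
    have hkn : k + 1 ≤ n := by omega
    have hlt : n - k < n := by omega
    refine Nat.find_min hP (by omega : n - k < Nat.find hP)
      ⟨fun t => if (t : ℕ) ≤ (i : ℕ) then c ⟨(t : ℕ), by have := t.2; omega⟩
        else c ⟨(t : ℕ) + k, by have := t.2; omega⟩, ?_, ?_, ?_⟩
    · simp only [Fin.val_zero]
      simp only [Nat.zero_le, ↓reduceIte]
      rw [hcc 0 _ 0 rfl]
      exact h0
    · simp only [Fin.val_last]
      rw [if_neg (by omega)]
      rw [hcc (n - k + k) _ (Fin.last n) (by simp [Fin.val_last]; omega)]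
      exact hl
    · intro t
      have ht := t.2
      simp only [Fin.coe_castSucc, Fin.val_succ]
      rcases lt_trichotomy ((t : ℕ) + 1) ((i : ℕ) + 1) with h1 | h1 | h1
      · rw [if_pos (by omega), if_pos (by omega)]
        have := hd ⟨(t : ℕ), by omega⟩
        rw [hcc (t : ℕ) _ (Fin.castSucc ⟨(t : ℕ), by omega⟩) rfl,
          hcc ((t : ℕ) + 1) _ (Fin.succ ⟨(t : ℕ), by omega⟩) rfl]
        exact this
      · -- t = i
        rw [if_pos (by omega), if_neg (by omega)]
        rw [hcc (t : ℕ) _ i (by omega), hcc ((t : ℕ) + 1 + k) _ j (by omega)]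
        exact hcon
      · rw [if_neg (by omega), if_neg (by omega)]
        have := hd ⟨(t : ℕ) + k, by omega⟩
        rw [hcc ((t : ℕ) + k) _ (Fin.castSucc ⟨(t : ℕ) + k, by omega⟩) rfl,
          hcc ((t : ℕ) + 1 + k) _ (Fin.succ ⟨(t : ℕ) + k, by omega⟩) (by simp; omega)]
        exact this
  refine ⟨n, c, h0, hl, hd, ?_⟩
  -- now bound the length
  have hn0 : n ≠ 0 := by
    intro h
    apply hxx
    rw [← h0, ← hl]
    congr 1
    exact Fin.ext (by simp [h])
  have hsum_le : (∑ i : Fin n, dist (c i.castSucc) (c i.succ)) ≤ (n : ℝ) * δ := by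
    calc (∑ i : Fin n, dist (c i.castSucc) (c i.succ)) ≤ ∑ _i : Fin n, δ :=
          Finset.sum_le_sum fun i _ => hd i
      _ = (n : ℝ) * δ := by simp [mul_comm]
  by_cases hn1 : n = 1
  · -- short case : chain of a single step
    have : (∑ i : Fin n, dist (c i.castSucc) (c i.succ)) ≤ dist x x' := by
      subst hn1
      rw [Fin.sum_univ_one]
      have e1 : c (Fin.castSucc 0) = x := by rw [← h0]; congr 1
      have e2 : c (Fin.succ 0) = x' := by rw [← hl]; congr 1
      rw [e1, e2]
    calc ENNReal.ofReal (∑ i : Fin n, dist (c i.castSucc) (c i.succ))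
        ≤ ENNReal.ofReal (dist x x') := ENNReal.ofReal_le_ofReal this
      _ ≤ μH[1] (Set.univ : Set X) := measure_ge_of_dist' x x'
      _ ≤ 4 * μH[1] (Set.univ : Set X) := le_mul_of_one_le_left (by simp) (by norm_num)
  · -- n ≥ 2
    have hn2 : 2 ≤ n := by omega
    set m : ℕ := n / 2 + 1 with hm
    have hm2 : 2 ≤ m := by omega
    set p : Fin m → X := fun k => c ⟨2 * (k : ℕ), by have := k.2; omega⟩ with hp
    have hpd : ∀ k k' : Fin m, k ≠ k' → δ < dist (p k) (p k') := by
      intro k k' hne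
      rcases lt_or_gt_of_ne (fun h => hne (Fin.ext h)) with h | h
      · exact hsep _ _ (by simp only [hp]; omega)
      · rw [dist_comm]
        exact hsep _ _ (by simp only [hp]; omega)
    have hdisj : Pairwise (Function.onFun Disjoint (fun k : Fin m => Metric.ball (p k) (δ / 2))) := by
      intro k k' hne
      rw [Function.onFun, Set.disjoint_left]
      intro z hz hz'
      have := dist_triangle (p k) z (p k')
      rw [Metric.mem_ball, dist_comm] at hz hz'
      have := hpd k k' hne
      have h3 : dist z (p k') = dist (p k') z := dist_comm _ _
      linarith
    have hsum : (m : ℝ≥0∞) * ENNReal.ofReal (δ / 2) ≤ μH[1] (Set.univ : Set X) := by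
      have hcard : (m : ℝ≥0∞) * ENNReal.ofReal (δ / 2)
          = ∑ _k : Fin m, ENNReal.ofReal (δ / 2) := by simp [mul_comm]
      rw [hcard]
      calc (∑ k : Fin m, ENNReal.ofReal (δ / 2))
          ≤ ∑ k : Fin m, μH[1] (Metric.ball (p k) (δ / 2)) := by
            refine Finset.sum_le_sum fun k _ => ?_
            have : Nontrivial (Fin m) := Fin.nontrivial_iff_two_le.mpr hm2
            obtain ⟨k', hk'⟩ := exists_ne k
            refine measure_ball_ge' (p k) (p k') (δ / 2) ?_
            have := hpd k k' (Ne.symm hk')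
            linarith
        _ = μH[1] (⋃ k : Fin m, Metric.ball (p k) (δ / 2)) := by
            rw [← tsum_fintype (L := SummationFilter.unconditional _)]
            exact (measure_iUnion hdisj fun k => measurableSet_ball).symm
        _ ≤ μH[1] (Set.univ : Set X) := measure_mono (Set.subset_univ _)
    calc ENNReal.ofReal (∑ i : Fin n, dist (c i.castSucc) (c i.succ))
        ≤ ENNReal.ofReal ((n : ℝ) * δ) := ENNReal.ofReal_le_ofReal hsum_le
      _ = (n : ℝ≥0∞) * ENNReal.ofReal δ := by
          rw [ENNReal.ofReal_mul (by positivity), ENNReal.ofReal_natCast]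
      _ ≤ ((2 * m : ℕ) : ℝ≥0∞) * ENNReal.ofReal δ := by
          have hnm : n ≤ 2 * m := by omega
          exact mul_le_mul_left (Nat.cast_le.mpr hnm) _
      _ = 4 * ((m : ℝ≥0∞) * ENNReal.ofReal (δ / 2)) := by
          have : ENNReal.ofReal δ = 2 * ENNReal.ofReal (δ / 2) := by
            rw [← ENNReal.ofReal_ofNat 2, ← ENNReal.ofReal_mul (by norm_num)]
            congr 1
            ring
          rw [this]
          push_cast
          ring
      _ ≤ 4 * μH[1] (Set.univ : Set X) := by gcongr
end

section
/- If γ : I → X is an injective continuous path defined on a closed interval, then length(γ) = H^1(γ(I)). -/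
open MeasureTheory ENNReal Set

lemma h1_singleton {X : Type*} [MetricSpace X] [MeasurableSpace X] [BorelSpace X] (x : X) :
    μH[1] ({x} : Set X) = 0 := by
  rcases MeasureTheory.Measure.hausdorffMeasure_zero_or_top (by norm_num : (0:ℝ) < 1) ({x} : Set X) with h | h
  · exact h
  · rw [MeasureTheory.Measure.hausdorffMeasure_zero_singleton] at h; simp at h

lemma edist_le_h1 {X : Type*} [MetricSpace X] [MeasurableSpace X] [BorelSpace X]
    {s : Set X} (hs : IsPreconnected s) {x y : X} (hx : x ∈ s) (hy : y ∈ s) :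
    edist x y ≤ μH[1] s := by
  have hf : LipschitzWith 1 (dist x) := LipschitzWith.dist_right x
  have h1 := hf.hausdorffMeasure_image_le (d := 1) (by norm_num) s
  have hconn : IsPreconnected ((dist x) '' s) := hs.image _ hf.continuous.continuousOn
  have hsub : Icc 0 (dist x y) ⊆ (dist x) '' s :=
    hconn.ordConnected.out ⟨x, hx, dist_self x⟩ ⟨y, hy, rfl⟩
  calc edist x y = volume (Icc 0 (dist x y)) := by
        rw [Real.volume_Icc, sub_zero, edist_dist]
    _ ≤ volume ((dist x) '' s) := measure_mono hsub
    _ = μH[1] ((dist x) '' s) := by rw [MeasureTheory.hausdorffMeasure_real]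
    _ ≤ μH[1] s := by simpa using h1
lemma var_le_h1 {X : Type*} [MetricSpace X] [MeasurableSpace X] [BorelSpace X]
    (a b : ℝ) (hab : a ≤ b) (γ : ℝ → X) (hγ : ContinuousOn γ (Icc a b))
    (hinj : InjOn γ (Icc a b)) :
    eVariationOn γ (Icc a b) ≤ μH[1] (γ '' Icc a b) := by
  apply iSup_le
  rintro ⟨n, u, hu, us⟩
  have hsub : ∀ i j : ℕ, Icc (u i) (u j) ⊆ Icc a b := fun i j =>
    Icc_subset_Icc (us i).1 (us j).2
  -- each piece
  have key : ∀ i : ℕ, edist (γ (u (i+1))) (γ (u i)) ≤ μH[1] (γ '' Ico (u i) (u (i+1))) := by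
    intro i
    have hIm : γ '' Ico (u i) (u (i+1)) =
        γ '' Icc (u i) (u (i+1)) \ {γ (u (i+1))} := by
      ext y
      constructor
      · rintro ⟨x, hx, rfl⟩
        refine ⟨⟨x, Ico_subset_Icc_self hx, rfl⟩, ?_⟩
        intro h
        have := hinj (hsub i (i+1) (Ico_subset_Icc_self hx)) (us (i+1)) (by simpa using h)
        exact absurd this (ne_of_lt hx.2)
      · rintro ⟨⟨x, hx, rfl⟩, hne⟩
        refine ⟨x, ⟨hx.1, lt_of_le_of_ne hx.2 ?_⟩, rfl⟩
        intro h; exact hne (by rw [h]; rfl)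
    have hpre : IsPreconnected (γ '' Icc (u i) (u (i+1))) :=
      isPreconnected_Icc.image _ (hγ.mono (hsub i (i+1)))
    have h1 : edist (γ (u (i+1))) (γ (u i)) ≤ μH[1] (γ '' Icc (u i) (u (i+1))) :=
      edist_le_h1 hpre ⟨u (i+1), ⟨hu (Nat.le_succ i), le_refl _⟩, rfl⟩
        ⟨u i, ⟨le_refl _, hu (Nat.le_succ i)⟩, rfl⟩
    refine h1.trans ?_
    have : γ '' Icc (u i) (u (i+1)) ⊆ (γ '' Ico (u i) (u (i+1))) ∪ {γ (u (i+1))} := by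
      rw [hIm]; intro y hy
      by_cases h : y = γ (u (i+1))
      · exact Or.inr h
      · exact Or.inl ⟨hy, h⟩
    calc μH[1] (γ '' Icc (u i) (u (i+1)))
        ≤ μH[1] (γ '' Ico (u i) (u (i+1))) + μH[1] ({γ (u (i+1))} : Set X) :=
          (measure_mono this).trans (measure_union_le _ _)
      _ = μH[1] (γ '' Ico (u i) (u (i+1))) := by rw [h1_singleton, add_zero]
  have hmeas : ∀ i : ℕ, MeasurableSet (γ '' Ico (u i) (u (i+1))) := by
    intro i
    have hc : IsCompact (γ '' Icc (u i) (u (i+1))) :=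
      (isCompact_Icc).image_of_continuousOn (hγ.mono (hsub i (i+1)))
    have hIm : γ '' Ico (u i) (u (i+1)) =
        γ '' Icc (u i) (u (i+1)) \ {γ (u (i+1))} := by
      ext y
      constructor
      · rintro ⟨x, hx, rfl⟩
        refine ⟨⟨x, Ico_subset_Icc_self hx, rfl⟩, ?_⟩
        intro h
        have := hinj (hsub i (i+1) (Ico_subset_Icc_self hx)) (us (i+1)) (by simpa using h)
        exact absurd this (ne_of_lt hx.2)
      · rintro ⟨⟨x, hx, rfl⟩, hne⟩
        refine ⟨x, ⟨hx.1, lt_of_le_of_ne hx.2 ?_⟩, rfl⟩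
        intro h; exact hne (by rw [h]; rfl)
    rw [hIm]
    exact hc.isClosed.measurableSet.diff (measurableSet_singleton _)
  have hdisj : (Finset.range n : Set ℕ).PairwiseDisjoint
      (fun i => γ '' Ico (u i) (u (i+1))) := by
    intro i hi j hj hij
    wlog h : i < j generalizing i j
    · exact (this hj hi hij.symm (by omega)).symm
    refine Set.disjoint_left.2 ?_
    rintro y ⟨x, hx, rfl⟩ ⟨z, hz, hzx⟩
    have hx' : x ∈ Icc a b := hsub i (i+1) (Ico_subset_Icc_self hx)
    have hz' : z ∈ Icc a b := hsub j (j+1) (Ico_subset_Icc_self hz)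
    have : z = x := hinj hz' hx' hzx
    subst this
    have : u (i+1) ≤ u j := hu (by omega)
    exact absurd (this.trans hz.1) (not_le.2 hx.2)
  calc ∑ i ∈ Finset.range n, edist (γ (u (i+1))) (γ (u i))
      ≤ ∑ i ∈ Finset.range n, μH[1] (γ '' Ico (u i) (u (i+1))) :=
        Finset.sum_le_sum fun i _ => key i
    _ = μH[1] (⋃ i ∈ Finset.range n, γ '' Ico (u i) (u (i+1))) :=
        (measure_biUnion_finset hdisj fun i _ => hmeas i).symm
    _ ≤ μH[1] (γ '' Icc a b) := by
        apply measure_mono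
        refine Set.iUnion₂_subset fun i _ => ?_
        exact image_mono ((Ico_subset_Icc_self).trans (hsub i (i+1)))
lemma h1_le_var {X : Type*} [MetricSpace X] [MeasurableSpace X] [BorelSpace X]
    (a b : ℝ) (hab : a ≤ b) (γ : ℝ → X) (hγ : ContinuousOn γ (Icc a b))
    (hinj : InjOn γ (Icc a b)) :
    μH[1] (γ '' Icc a b) ≤ eVariationOn γ (Icc a b) := by
  by_cases htop : eVariationOn γ (Icc a b) = ⊤
  · simp [htop]
  set s := Icc a b with hs
  have hbv : BoundedVariationOn γ s := htop
  have hlbv : LocallyBoundedVariationOn γ s := hbv.locallyBoundedVariationOn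
  have has : a ∈ s := ⟨le_refl a, hab⟩
  set φ := variationOnFromTo γ s a with hφ
  set f := naturalParameterization γ s a with hf
  have hus : HasUnitSpeedOn f (φ '' s) := has_unit_speed_naturalParameterization γ hlbv has
  have himg : γ '' s = f '' (φ '' s) := by
    rw [← image_comp]
    apply image_congr
    intro x hx
    exact (edist_eq_zero.1 (edist_naturalParameterization_eq_zero hlbv has hx)).symm
  have hlip : LipschitzOnWith 1 f (φ '' s) := by
    intro x hx y hy
    rcases le_total x y with h | h
    · have h1 : edist (f x) (f y) ≤ eVariationOn f (φ '' s ∩ Icc x y) :=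
        eVariationOn.edist_le f ⟨hx, le_refl x, h⟩ ⟨hy, h, le_refl y⟩
      rw [hus hx hy] at h1
      refine h1.trans ?_
      rw [ENNReal.coe_one, one_mul, NNReal.coe_one, one_mul, edist_dist,
        Real.dist_eq, abs_of_nonpos (by linarith)]
      exact ENNReal.ofReal_le_ofReal (by linarith)
    · have h1 : edist (f x) (f y) ≤ eVariationOn f (φ '' s ∩ Icc y x) :=
        (edist_comm (f x) (f y) ▸ eVariationOn.edist_le f ⟨hy, le_refl y, h⟩ ⟨hx, h, le_refl x⟩)
      rw [hus hy hx] at h1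
      refine h1.trans ?_
      rw [ENNReal.coe_one, one_mul, NNReal.coe_one, one_mul, edist_dist,
        Real.dist_eq, abs_of_nonneg (by linarith)]
  set L := (eVariationOn γ s).toReal with hL
  have hts : φ '' s ⊆ Icc 0 L := by
    rintro _ ⟨x, hx, rfl⟩
    constructor
    · exact variationOnFromTo.nonneg_of_le γ s hx.1
    · rw [hφ, variationOnFromTo.eq_of_le γ s hx.1]
      exact ENNReal.toReal_mono htop (eVariationOn.mono γ (inter_subset_left))
  have h2 : μH[1] (f '' (φ '' s)) ≤ μH[1] (φ '' s) := by
    have := hlip.hausdorffMeasure_image_le (d := 1) (by norm_num)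
    simpa using this
  calc μH[1] (γ '' s) = μH[1] (f '' (φ '' s)) := by rw [himg]
    _ ≤ μH[1] (φ '' s) := h2
    _ = volume (φ '' s) := by rw [MeasureTheory.hausdorffMeasure_real]
    _ ≤ volume (Icc 0 L) := measure_mono hts
    _ = ENNReal.ofReal L := by rw [Real.volume_Icc, sub_zero]
    _ = eVariationOn γ s := ENNReal.ofReal_toReal htop

theorem stmt13 {X : Type*} [MetricSpace X] [MeasurableSpace X] [BorelSpace X]
    (a b : ℝ) (hab : a ≤ b) (γ : ℝ → X) (hγ : ContinuousOn γ (Icc a b))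
    (hinj : InjOn γ (Icc a b)) :
    eVariationOn γ (Icc a b) = μH[1] (γ '' Icc a b) :=
  le_antisymm (var_le_h1 a b hab γ hγ hinj) (h1_le_var a b hab γ hγ hinj)
end
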